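/- arXiv:2507.11817 — 5 statements merged into one kernel-verified Lean document; each statement's English description precedes it below -/
import Mathlib

section
/- If G is a triangle-free non-bipartite graph on n vertices, then G has at most ⌊(n-1)²/4⌋ + 1 edges. -/
open SimpleGraph Finset

private lemma exists_odd_closed_walk {V : Type*} (G : SimpleGraph V)
    (hnb : ¬ G.Colorable 2) :
    ∃ (u : V) (w : G.Walk u u), Odd w.length := by
  by_contra h
  push_neg at h
  apply hnb
  refine ⟨SimpleGraph.Coloring.mk
    (fun v => ⟨G.dist (G.connectedComponentMk v).out v % 2, by omega⟩) ?_⟩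
  intro a b hab heq
  have hcomp : G.connectedComponentMk a = G.connectedComponentMk b :=
    SimpleGraph.ConnectedComponent.eq.mpr hab.reachable
  set r := (G.connectedComponentMk a).out with hrdef
  have hra : G.Reachable r a := by
    rw [← SimpleGraph.ConnectedComponent.eq]
    exact (G.connectedComponentMk a).out_eq
  have hrb : G.Reachable r b := by
    rw [← SimpleGraph.ConnectedComponent.eq, hrdef, hcomp]
    exact (G.connectedComponentMk b).out_eq
  obtain ⟨p, hp⟩ := hra.exists_walk_length_eq_dist
  obtain ⟨q, hq⟩ := hrb.exists_walk_length_eq_dist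
  have hparity : (G.dist r a) % 2 = (G.dist r b) % 2 := by
    have : (G.dist (G.connectedComponentMk a).out a) % 2
        = (G.dist (G.connectedComponentMk b).out b) % 2 := by
      have h2 := congrArg Fin.val heq
      dsimp only at h2
      exact h2
    rw [← hcomp] at this
    rw [← hrdef] at this
    exact this
  have hodd : Odd (p.append (Walk.cons hab q.reverse)).length := by
    simp only [Walk.length_append, Walk.length_cons, Walk.length_reverse, hp, hq]
    generalize G.dist r a = da at hparity ⊢
    generalize G.dist r b = db at hparity ⊢
    rw [Nat.odd_iff]
    omega
  exact h r _ hodd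


open SimpleGraph Finset

section WalkLemmas

variable {V : Type*}

private lemma walk_eq_of_length_zero {G : SimpleGraph V} {a b : V} (p : G.Walk a b)
    (h : p.length = 0) : a = b := by
  cases p with
  | nil => rfl
  | cons h' p' => simp [SimpleGraph.Walk.length_cons] at h

private lemma odd_ge {G : SimpleGraph V} {L : ℕ}
    (hmin : ∀ (u : V) (c : G.Walk u u), Odd c.length → L ≤ c.length)
    {v a b : V} (p : G.Walk a b) (hva : G.Adj v a) (hvb : G.Adj v b)
    (hodd : Odd p.length) : L ≤ p.length + 2 := by
  have h := hmin v (Walk.cons hva (p.append (Walk.cons hvb.symm Walk.nil)))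
  simp only [Walk.length_cons, Walk.length_append, Walk.length_nil] at h
  rw [Nat.odd_iff] at hodd
  have h2 := h (by rw [Nat.odd_iff]; omega)
  omega

private lemma split_contra {G : SimpleGraph V} {L : ℕ}
    (hmin : ∀ (u : V) (c : G.Walk u u), Odd c.length → L ≤ c.length) (hL : Odd L)
    {v a b c : V} (p : G.Walk a b) (q : G.Walk b c)
    (hva : G.Adj v a) (hvb : G.Adj v b) (hvc : G.Adj v c)
    (hab : a ≠ b) (hbc : b ≠ c) (hsum : p.length + q.length + 2 = L) : False := by
  rw [Nat.odd_iff] at hL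
  rcases Nat.even_or_odd p.length with hp | hp
  · have hq : Odd q.length := by
      rw [Nat.even_iff] at hp; rw [Nat.odd_iff]; omega
    have hge := odd_ge hmin q hvb hvc hq
    exact hab (walk_eq_of_length_zero p (by omega))
  · have hge := odd_ge hmin p hva hvb hp
    exact hbc (walk_eq_of_length_zero q (by omega))

private lemma length_rotate' {G : SimpleGraph V} [DecidableEq V] {u x : V} (w : G.Walk u u)
    (hx : x ∈ w.support) : (w.rotate x hx).length = w.length := by
  have h1 := congrArg Walk.length (w.take_spec hx)
  rw [Walk.length_append] at h1
  unfold Walk.rotate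
  rw [Walk.length_append]
  omega

private lemma count_tail_eq_one {G : SimpleGraph V} [DecidableEq V] {u : V} (w : G.Walk u u)
    (hL : Odd w.length) (hL5 : 5 ≤ w.length)
    (hmin : ∀ (a : V) (c : G.Walk a a), Odd c.length → w.length ≤ c.length)
    {x : V} (hx : x ∈ w.support) : w.support.tail.count x = 1 := by
  have hperm := (w.support_rotate x hx).perm
  rw [← hperm.count_eq]
  have hlen : (w.rotate x hx).length = w.length := length_rotate' w hx
  rcases hw2 : w.rotate x hx with _ | ⟨hadj, rest⟩
  · rw [hw2] at hlen; simp at hlen; omega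
  · rw [hw2] at hlen
    rw [Walk.length_cons] at hlen
    have hxr : x ∈ rest.support := rest.end_mem_support
    have hsum := congrArg Walk.length (rest.take_spec hxr)
    rw [Walk.length_append] at hsum
    have htle := rest.length_takeUntil_le hxr
    have hdrop0 : (rest.dropUntil x hxr).length = 0 := by
      rw [Nat.odd_iff] at hL
      rcases Nat.even_or_odd (rest.dropUntil x hxr).length with hd | hd
      · have hodd1 : Odd (Walk.cons hadj (rest.takeUntil x hxr)).length := by
          rw [Walk.length_cons, Nat.odd_iff]
          rw [Nat.even_iff] at hd
          omega
        have := hmin x _ hodd1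
        rw [Walk.length_cons] at this
        omega
      · have := hmin x _ hd
        omega
    have hdsup : (rest.dropUntil x hxr).support = [x] := by
      have h1 := (rest.dropUntil x hxr).support_eq_cons
      have h2 := (rest.dropUntil x hxr).length_support
      rw [hdrop0, h1] at h2
      simp only [List.length_cons] at h2
      have h3 : (rest.dropUntil x hxr).support.tail = [] :=
        List.eq_nil_of_length_eq_zero (by omega)
      rw [h1, h3]
    have hrsup : rest.support = (rest.takeUntil x hxr).support := by
      conv_lhs => rw [← rest.take_spec hxr]
      rw [Walk.support_append, hdsup]
      simp
    simp only [Walk.support_cons, List.tail_cons]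
    rw [hrsup]
    exact rest.count_support_takeUntil_eq_one hxr

private lemma card_support_toFinset {G : SimpleGraph V} [DecidableEq V] {u : V} (w : G.Walk u u)
    (hL : Odd w.length) (hL5 : 5 ≤ w.length)
    (hmin : ∀ (a : V) (c : G.Walk a a), Odd c.length → w.length ≤ c.length) :
    w.support.toFinset.card = w.length := by
  have hnd : w.support.tail.Nodup := by
    rw [List.nodup_iff_count_le_one]
    intro a
    by_cases ha : a ∈ w.support
    · rw [count_tail_eq_one w hL hL5 hmin ha]
    · have h0 : w.support.tail.count a = 0 :=
        List.count_eq_zero.mpr (fun hmem => ha (List.mem_of_mem_tail hmem))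
      omega
  have hu : u ∈ w.support.tail := by
    have h1 := count_tail_eq_one w hL hL5 hmin w.start_mem_support
    rw [← List.count_pos_iff]
    omega
  have heq : w.support.toFinset = w.support.tail.toFinset := by
    conv_lhs => rw [w.support_eq_cons]
    rw [List.toFinset_cons]
    exact Finset.insert_eq_self.mpr (List.mem_toFinset.mpr hu)
  rw [heq, List.toFinset_card_of_nodup hnd]
  have h2 : w.support.length = w.length + 1 := w.length_support
  have h3 : w.support.length = w.support.tail.length + 1 := by
    rw [w.support_eq_cons]; simp
  omega

end WalkLemmas
section NB2

variable {V : Type*}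

private lemma arc_case {G : SimpleGraph V} [DecidableEq V] (hfree : G.CliqueFree 3)
    {L : ℕ} (hmin : ∀ (a : V) (c : G.Walk a a), Odd c.length → L ≤ c.length) (hL : Odd L)
    {v z α β : V} (long : G.Walk α β) (arc : G.Walk β α)
    (hvα : G.Adj v α) (hvβ : G.Adj v β) (hvz : G.Adj v z)
    (hlong : long.length + 2 = L) (harc : arc.length = 2)
    (hzmem : z ∈ long.support ∨ z ∈ arc.support) (hzα : z ≠ α) (hzβ : z ≠ β) : False := by
  rcases hzmem with hzl | hza
  · have hs := congrArg Walk.length (long.take_spec hzl)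
    rw [Walk.length_append] at hs
    exact split_contra hmin hL (long.takeUntil z hzl) (long.dropUntil z hzl)
      hvα hvz hvβ (Ne.symm hzα) hzβ (by omega)
  · obtain ⟨i, hgv, hile⟩ := Walk.mem_support_iff_exists_getVert.mp hza
    rw [harc] at hile
    interval_cases i
    · rw [Walk.getVert_zero] at hgv
      exact hzβ hgv.symm
    · have h1 : G.Adj β z := by
        have h2 := arc.adj_getVert_succ (i := 0) (by omega)
        rwa [Walk.getVert_zero, hgv] at h2
      exact hfree {v, β, z} (SimpleGraph.is3Clique_triple_iff.mpr ⟨hvβ, hvz, h1⟩)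
    · have h2 : arc.getVert 2 = α := by rw [← harc]; exact arc.getVert_length
      exact hzα (by rw [← hgv, h2])

private lemma nb2 {G : SimpleGraph V} [DecidableEq V] [DecidableRel G.Adj]
    (hfree : G.CliqueFree 3) {u : V} (w : G.Walk u u)
    (hL : Odd w.length) (hL5 : 5 ≤ w.length)
    (hmin : ∀ (a : V) (c : G.Walk a a), Odd c.length → w.length ≤ c.length)
    (v : V) : (w.support.toFinset.filter (fun b => G.Adj v b)).card ≤ 2 := by
  by_contra hcon
  push_neg at hcon
  obtain ⟨x, y, z, hx, hy, hz, hxy, hxz, hyz⟩ := Finset.two_lt_card_iff.mp hcon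
  simp only [Finset.mem_filter, List.mem_toFinset] at hx hy hz
  obtain ⟨hxs, hvx⟩ := hx
  obtain ⟨hys, hvy⟩ := hy
  obtain ⟨hzs, hvz⟩ := hz
  have hmem : ∀ t ∈ w.support, t ∈ (w.rotate x hxs).support := by
    intro t ht
    have h1 : w.support.tail.count t = 1 := count_tail_eq_one w hL hL5 hmin ht
    have h2 : t ∈ w.support.tail := by rw [← List.count_pos_iff]; omega
    exact List.mem_of_mem_tail (((w.support_rotate x hxs).perm.mem_iff).mpr h2)
  have hy' : y ∈ (w.rotate x hxs).support := hmem y hys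
  have hz' : z ∈ (w.rotate x hxs).support := hmem z hzs
  have hlen' : (w.rotate x hxs).length = w.length := length_rotate' w hxs
  have hsum : ((w.rotate x hxs).takeUntil y hy').length
      + ((w.rotate x hxs).dropUntil y hy').length = w.length := by
    have h3 := congrArg Walk.length ((w.rotate x hxs).take_spec hy')
    rw [Walk.length_append] at h3
    omega
  have hzpq : z ∈ ((w.rotate x hxs).takeUntil y hy').support
      ∨ z ∈ ((w.rotate x hxs).dropUntil y hy').support := by
    have h4 : z ∈ (((w.rotate x hxs).takeUntil y hy').append
        ((w.rotate x hxs).dropUntil y hy')).support := by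
      rw [(w.rotate x hxs).take_spec hy']; exact hz'
    rwa [Walk.mem_support_append_iff] at h4
  have hLmod := hL
  rw [Nat.odd_iff] at hLmod
  rcases Nat.even_or_odd ((w.rotate x hxs).takeUntil y hy').length with hp | hp
  · -- takeUntil even, dropUntil odd : long := dropUntil (y → x), arc := takeUntil (x → y)
    have hq : Odd ((w.rotate x hxs).dropUntil y hy').length := by
      rw [Nat.even_iff] at hp; rw [Nat.odd_iff]; omega
    have hge := odd_ge hmin _ hvy hvx hq
    have hp0 : ((w.rotate x hxs).takeUntil y hy').length ≠ 0 :=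
      fun h => hxy (walk_eq_of_length_zero _ h)
    have hp2 : ((w.rotate x hxs).takeUntil y hy').length = 2 := by
      rw [Nat.even_iff] at hp; omega
    exact arc_case hfree hmin hL ((w.rotate x hxs).dropUntil y hy')
      ((w.rotate x hxs).takeUntil y hy') hvy hvx hvz (by omega) hp2 hzpq.symm
      (Ne.symm hyz) (Ne.symm hxz)
  · -- takeUntil odd : long := takeUntil (x → y), arc := dropUntil (y → x)
    have hge := odd_ge hmin _ hvx hvy hp
    have hq0 : ((w.rotate x hxs).dropUntil y hy').length ≠ 0 :=
      fun h => hxy (walk_eq_of_length_zero _ h).symm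
    have hq2 : ((w.rotate x hxs).dropUntil y hy').length = 2 := by
      rw [Nat.odd_iff] at hp; omega
    exact arc_case hfree hmin hL ((w.rotate x hxs).takeUntil y hy')
      ((w.rotate x hxs).dropUntil y hy') hvx hvy hvz (by omega) hq2 hzpq
      (Ne.symm hxz) (Ne.symm hyz)

private lemma len_ge_five {G : SimpleGraph V} [DecidableEq V] (hfree : G.CliqueFree 3) {u : V} (w : G.Walk u u)
    (hodd : Odd w.length) : 5 ≤ w.length := by
  by_contra hcon
  push_neg at hcon
  have hparity := hodd
  rw [Nat.odd_iff] at hparity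
  have h13 : w.length = 1 ∨ w.length = 3 := by omega
  rcases h13 with h1 | h3
  · have h01 := w.adj_getVert_succ (i := 0) (by omega)
    rw [Walk.getVert_zero] at h01
    have he : w.getVert 1 = u := by rw [← h1]; exact w.getVert_length
    rw [he] at h01
    exact h01.ne rfl
  · have h01 := w.adj_getVert_succ (i := 0) (by omega)
    have h12 := w.adj_getVert_succ (i := 1) (by omega)
    have h23 := w.adj_getVert_succ (i := 2) (by omega)
    rw [Walk.getVert_zero] at h01
    have he : w.getVert 3 = u := by rw [← h3]; exact w.getVert_length
    rw [he] at h23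
    exact hfree {u, w.getVert 1, w.getVert 2}
      (SimpleGraph.is3Clique_triple_iff.mpr ⟨h01, h23.symm, h12⟩)

end NB2
section Counting

variable {V : Type*}

private def restrictG (G : SimpleGraph V) [DecidableEq V] (U : Finset V) : SimpleGraph V where
  Adj x y := G.Adj x y ∧ x ∈ U ∧ y ∈ U
  symm := ⟨fun x y h => ⟨h.1.symm, h.2.2, h.2.1⟩⟩
  loopless := ⟨fun x h => G.loopless.irrefl x h.1⟩

private instance restrictDec (G : SimpleGraph V) [DecidableRel G.Adj] [DecidableEq V]
    (U : Finset V) : DecidableRel (restrictG G U).Adj := fun x y =>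
  inferInstanceAs (Decidable (G.Adj x y ∧ x ∈ U ∧ y ∈ U))

private def crossG (G : SimpleGraph V) [DecidableEq V] (U : Finset V) : SimpleGraph V where
  Adj x y := G.Adj x y ∧ ¬(x ∈ U ↔ y ∈ U)
  symm := ⟨fun x y h => ⟨h.1.symm, fun hiff => h.2 hiff.symm⟩⟩
  loopless := ⟨fun x h => h.2 Iff.rfl⟩

private instance crossDec (G : SimpleGraph V) [DecidableRel G.Adj] [DecidableEq V]
    (U : Finset V) : DecidableRel (crossG G U).Adj := fun x y =>
  inferInstanceAs (Decidable (G.Adj x y ∧ ¬(x ∈ U ↔ y ∈ U)))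

private lemma filter_pair_card_le {G : SimpleGraph V} [DecidableEq V] [DecidableRel G.Adj]
    (hfree : G.CliqueFree 3) {a b : V} (hab : G.Adj a b) (U : Finset V) :
    (U.filter (G.Adj a)).card + (U.filter (G.Adj b)).card ≤ U.card := by
  have hdisj : Disjoint (U.filter (G.Adj a)) (U.filter (G.Adj b)) := by
    rw [Finset.disjoint_left]
    intro c hc1 hc2
    rw [Finset.mem_filter] at hc1 hc2
    exact hfree {a, b, c} (SimpleGraph.is3Clique_triple_iff.mpr ⟨hab, hc1.2, hc2.2⟩)
  rw [← Finset.card_union_of_disjoint hdisj]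
  exact Finset.card_le_card
    (Finset.union_subset (Finset.filter_subset _ _) (Finset.filter_subset _ _))

private lemma mantel_sum {G : SimpleGraph V} [DecidableEq V] [DecidableRel G.Adj]
    (hfree : G.CliqueFree 3) (T : Finset V) :
    ∑ a ∈ T, (T.filter (G.Adj a)).card ≤ 2 * (T.card ^ 2 / 4) := by
  induction T using Finset.strongInduction with
  | _ T ih =>
  by_cases hE : ∃ a ∈ T, ∃ b ∈ T, G.Adj a b
  · obtain ⟨a, ha, b, hb, hab⟩ := hE
    have hne : a ≠ b := hab.ne
    have hpairsub : ({a, b} : Finset V) ⊆ T := by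
      rw [Finset.insert_subset_iff]; exact ⟨ha, Finset.singleton_subset_iff.mpr hb⟩
    have hT2 : 2 ≤ T.card := by
      have := Finset.card_le_card hpairsub
      rwa [Finset.card_pair hne] at this
    have hsub : T \ {a, b} ⊂ T :=
      Finset.sdiff_ssubset hpairsub ⟨a, Finset.mem_insert_self a {b}⟩
    have hcard : (T \ {a, b}).card = T.card - 2 := by
      rw [Finset.card_sdiff_of_subset hpairsub, Finset.card_pair hne]
    have hTU : (T \ {a, b}) ∪ {a, b} = T := Finset.sdiff_union_of_subset hpairsub
    -- split the sum
    rw [← Finset.sum_sdiff hpairsub]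
    have hstep1 : ∑ x ∈ T \ {a, b}, (T.filter (G.Adj x)).card
        ≤ (∑ x ∈ T \ {a, b}, ((T \ {a, b}).filter (G.Adj x)).card) + (T.card - 2) := by
      have hone : ∀ x ∈ T \ {a, b}, (T.filter (G.Adj x)).card
          ≤ ((T \ {a, b}).filter (G.Adj x)).card
            + ((if G.Adj x a then 1 else 0) + (if G.Adj x b then 1 else 0)) := by
        intro x hxm
        have : T.filter (G.Adj x) = ((T \ {a, b}).filter (G.Adj x))
            ∪ (({a, b} : Finset V).filter (G.Adj x)) := by
          rw [← Finset.filter_union, hTU]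
        rw [this]
        refine (Finset.card_union_le _ _).trans ?_
        have hpf : (({a, b} : Finset V).filter (G.Adj x)).card
            ≤ (if G.Adj x a then 1 else 0) + (if G.Adj x b then 1 else 0) := by
          have h2 : ({a, b} : Finset V) = {a} ∪ {b} := rfl
          rw [h2, Finset.filter_union]
          refine (Finset.card_union_le _ _).trans ?_
          rw [Finset.filter_singleton, Finset.filter_singleton]
          split <;> split <;> simp
        omega
      refine (Finset.sum_le_sum hone).trans ?_
      rw [Finset.sum_add_distrib, Finset.sum_add_distrib]
      have hca : ∑ x ∈ T \ {a, b}, (if G.Adj x a then 1 else 0)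
          = ((T \ {a, b}).filter (G.Adj a)).card := by
        rw [Finset.card_filter]
        apply Finset.sum_congr rfl
        intro x _
        simp [G.adj_comm]
      have hcb : ∑ x ∈ T \ {a, b}, (if G.Adj x b then 1 else 0)
          = ((T \ {a, b}).filter (G.Adj b)).card := by
        rw [Finset.card_filter]
        apply Finset.sum_congr rfl
        intro x _
        simp [G.adj_comm]
      have := filter_pair_card_le hfree hab (T \ {a, b})
      omega
    have hstep2 : ∑ x ∈ ({a, b} : Finset V), (T.filter (G.Adj x)).card ≤ T.card := by
      rw [Finset.sum_pair hne]
      exact filter_pair_card_le hfree hab T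
    have hih := ih _ hsub
    rw [hcard] at hih
    -- arithmetic
    obtain ⟨r, hr⟩ : ∃ r, T.card = r + 2 := ⟨T.card - 2, by omega⟩
    have hexp : (r + 2) ^ 2 = r ^ 2 + 4 * (r + 1) := by ring
    have hdiv : (r ^ 2 + 4 * (r + 1)) / 4 = r ^ 2 / 4 + (r + 1) :=
      Nat.add_mul_div_left _ _ (by norm_num)
    rw [hr] at hih hstep1 hstep2 ⊢
    rw [hexp, hdiv]
    simp only [Nat.add_sub_cancel] at hih hstep1
    omega
  · push_neg at hE
    have : ∀ a ∈ T, (T.filter (G.Adj a)).card = 0 := by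
      intro a ha
      rw [Finset.card_eq_zero, Finset.filter_eq_empty_iff]
      exact fun b hbT => hE a ha b hbT
    rw [Finset.sum_congr rfl this]
    simp

private lemma restrict_handshake (G : SimpleGraph V) [Fintype V] [DecidableEq V]
    [DecidableRel G.Adj] (U : Finset V) :
    2 * (restrictG G U).edgeFinset.card = ∑ a ∈ U, (U.filter (G.Adj a)).card := by
  rw [← SimpleGraph.sum_degrees_eq_twice_card_edges]
  rw [← Finset.sum_subset (Finset.subset_univ U)]
  · apply Finset.sum_congr rfl
    intro a haU
    rw [← SimpleGraph.card_neighborFinset_eq_degree, SimpleGraph.neighborFinset_eq_filter]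
    congr 1
    ext b
    simp only [Finset.mem_filter, Finset.mem_univ, true_and]
    simp only [restrictG]
    constructor
    · rintro ⟨h1, _, h3⟩; exact ⟨h3, h1⟩
    · rintro ⟨h1, h2⟩; exact ⟨h2, haU, h1⟩
  · intro x _ hxU
    rw [← SimpleGraph.card_neighborFinset_eq_degree, SimpleGraph.neighborFinset_eq_filter,
      Finset.card_eq_zero, Finset.filter_eq_empty_iff]
    rintro b - ⟨-, hx, -⟩
    exact hxU hx

end Counting
section Cross

variable {V : Type*}

private lemma cross_card_le (G : SimpleGraph V) [Fintype V] [DecidableEq V] [LinearOrder V]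
    [DecidableRel G.Adj] (U : Finset V) :
    (crossG G U).edgeFinset.card ≤ ∑ a ∈ Uᶜ, (U.filter (G.Adj a)).card := by
  classical
  set f : Sym2 V → V × V := Sym2.lift ⟨fun x y =>
    if x ∈ U ∧ y ∉ U then (y, x) else if y ∈ U ∧ x ∉ U then (x, y) else (min x y, max x y),
    by
      intro x y
      dsimp only
      by_cases hx : x ∈ U <;> by_cases hy : y ∈ U <;>
        simp [hx, hy, min_comm, max_comm]⟩ with hf
  set P : Finset (V × V) := (Uᶜ ×ˢ U).filter (fun p => G.Adj p.1 p.2) with hP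
  have hkey : ∀ e ∈ (crossG G U).edgeFinset, f e ∈ P ∧ s((f e).1, (f e).2) = e := by
    intro e he
    induction e with
    | h x y =>
      rw [SimpleGraph.mem_edgeFinset, SimpleGraph.mem_edgeSet] at he
      obtain ⟨hadj, hniff⟩ := he
      rw [hf]
      by_cases hx : x ∈ U
      · have hy : y ∉ U := fun hy => hniff ⟨fun _ => hy, fun _ => hx⟩
        rw [Sym2.lift_mk]
        simp only [hx, hy, not_true_eq_false, and_true, and_false, if_true, not_false_eq_true]
        constructor
        · rw [hP, Finset.mem_filter, Finset.mem_product]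
          exact ⟨⟨Finset.mem_compl.mpr hy, hx⟩, hadj.symm⟩
        · exact Sym2.eq_swap
      · have hy : y ∈ U := by
          by_contra hy
          exact hniff ⟨fun h => absurd h hx, fun h => absurd h hy⟩
        rw [Sym2.lift_mk]
        simp only [hx, hy, not_true_eq_false, false_and, and_true, if_false, if_true,
          not_false_eq_true]
        rw [hP, Finset.mem_filter, Finset.mem_product]
        exact ⟨⟨Finset.mem_compl.mpr hx, hy⟩, hadj⟩
  have hle1 : (crossG G U).edgeFinset.card ≤ P.card := by
    apply Finset.card_le_card_of_injOn f (fun e he => (hkey e he).1)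
    intro e1 he1 e2 he2 hfe
    have h1 := (hkey e1 (by simpa using he1)).2
    have h2 := (hkey e2 (by simpa using he2)).2
    rw [← h1, ← h2, hfe]
  refine hle1.trans ?_
  rw [Finset.card_eq_sum_card_fiberwise (t := Uᶜ) (f := fun p => p.1)]
  · apply Finset.sum_le_sum
    intro a haU
    apply Finset.card_le_card_of_injOn (fun p => p.2)
    · intro p hp
      rw [Finset.mem_coe, Finset.mem_filter] at hp
      obtain ⟨hp1, hp2⟩ := hp
      rw [hP, Finset.mem_filter, Finset.mem_product] at hp1
      rw [Finset.mem_coe, Finset.mem_filter]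
      rw [hp2] at hp1
      exact ⟨hp1.1.2, hp1.2⟩
    · intro p hp q hq hpq
      simp only [Finset.coe_filter, Set.mem_setOf_eq] at hp hq
      have : p.1 = q.1 := by rw [hp.2, hq.2]
      exact Prod.ext this hpq
  · intro p hp
    rw [Finset.mem_coe, hP, Finset.mem_filter, Finset.mem_product] at hp
    exact hp.1.1

end Cross
/-- Erdős: a triangle-free non-bipartite graph on `n` vertices has at most
`⌊(n-1)²/4⌋ + 1` edges. -/
theorem erdos_nonbipartite_trianglefree {n : ℕ} (G : SimpleGraph (Fin n))
    [DecidableRel G.Adj] (hfree : G.CliqueFree 3) (hnb : ¬ G.Colorable 2) :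
    G.edgeFinset.card ≤ (n - 1) ^ 2 / 4 + 1 := by
  classical
  obtain ⟨u0, w0, hw0⟩ := exists_odd_closed_walk G hnb
  have hex : ∃ L : ℕ, ∃ (u : Fin n) (w : G.Walk u u), w.length = L ∧ Odd L :=
    ⟨w0.length, u0, w0, rfl, hw0⟩
  obtain ⟨u, w, hwlen, hwodd'⟩ := Nat.find_spec hex
  have hwodd : Odd w.length := by rw [hwlen]; exact hwodd'
  have hmin : ∀ (a : Fin n) (c : G.Walk a a), Odd c.length → w.length ≤ c.length := by
    intro a c hc
    rw [hwlen]
    by_contra hlt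
    push_neg at hlt
    exact Nat.find_min hex hlt ⟨a, c, rfl, hc⟩
  have hL5 : 5 ≤ w.length := len_ge_five hfree w hwodd
  set S : Finset (Fin n) := w.support.toFinset with hS
  have hscard : S.card = w.length := card_support_toFinset w hwodd hL5 hmin
  have hnb2 : ∀ v : Fin n, (S.filter (fun b => G.Adj v b)).card ≤ 2 :=
    fun v => nb2 hfree w hwodd hL5 hmin v
  have hsplit : G.edgeFinset
      = (restrictG G S).edgeFinset ∪ (crossG G S).edgeFinset
        ∪ (restrictG G Sᶜ).edgeFinset := by
    ext e
    induction e with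
    | h x y =>
      simp only [Finset.mem_union, SimpleGraph.mem_edgeFinset, SimpleGraph.mem_edgeSet]
      simp only [restrictG, crossG, Finset.mem_compl]
      by_cases hx : x ∈ S <;> by_cases hy : y ∈ S <;> tauto
  have hd1 : Disjoint (restrictG G S).edgeFinset (crossG G S).edgeFinset := by
    rw [Finset.disjoint_left]
    intro e he1 he2
    induction e with
    | h x y =>
      rw [SimpleGraph.mem_edgeFinset, SimpleGraph.mem_edgeSet] at he1 he2
      exact he2.2 ⟨fun _ => he1.2.2, fun _ => he1.2.1⟩
  have hd2 : Disjoint ((restrictG G S).edgeFinset ∪ (crossG G S).edgeFinset)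
      (restrictG G Sᶜ).edgeFinset := by
    rw [Finset.disjoint_left]
    intro e he1 he2
    induction e with
    | h x y =>
      rw [Finset.mem_union] at he1
      rw [SimpleGraph.mem_edgeFinset, SimpleGraph.mem_edgeSet] at he2
      have hx : x ∉ S := Finset.mem_compl.mp he2.2.1
      have hy : y ∉ S := Finset.mem_compl.mp he2.2.2
      rcases he1 with h | h <;>
        rw [SimpleGraph.mem_edgeFinset, SimpleGraph.mem_edgeSet] at h
      · exact hx h.2.1
      · exact h.2 ⟨fun hh => absurd hh hx, fun hh => absurd hh hy⟩
  have hcardsplit : G.edgeFinset.card = (restrictG G S).edgeFinset.card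
      + (crossG G S).edgeFinset.card + (restrictG G Sᶜ).edgeFinset.card := by
    rw [hsplit, Finset.card_union_of_disjoint hd2, Finset.card_union_of_disjoint hd1]
  have hb1 : (restrictG G S).edgeFinset.card ≤ S.card := by
    have h1 := restrict_handshake G S
    have h2 : ∑ a ∈ S, (S.filter (G.Adj a)).card ≤ ∑ a ∈ S, 2 :=
      Finset.sum_le_sum (fun a _ => hnb2 a)
    rw [Finset.sum_const, smul_eq_mul] at h2
    omega
  have hb2 : (crossG G S).edgeFinset.card ≤ 2 * Sᶜ.card := by
    refine (cross_card_le G S).trans ?_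
    have h2 : ∑ a ∈ Sᶜ, (S.filter (G.Adj a)).card ≤ ∑ a ∈ Sᶜ, 2 :=
      Finset.sum_le_sum (fun a _ => hnb2 a)
    rw [Finset.sum_const, smul_eq_mul] at h2
    omega
  have hb3 : (restrictG G Sᶜ).edgeFinset.card ≤ Sᶜ.card ^ 2 / 4 := by
    have h1 := restrict_handshake G Sᶜ
    have h2 := mantel_sum (G := G) hfree Sᶜ
    omega
  have hnn : S.card + Sᶜ.card = n := by
    rw [Finset.card_add_card_compl, Fintype.card_fin]
  obtain ⟨k, hk⟩ : ∃ k, S.card = k + 5 := ⟨S.card - 5, by omega⟩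
  set m := Sᶜ.card
  have hn1 : n - 1 = m + k + 4 := by omega
  have hB : (n - 1) ^ 2 = m ^ 2 + (k + 4) * (2 * m + k + 4) := by rw [hn1]; ring
  have hkey : 4 * k + 8 * m + 16 ≤ (k + 4) * (2 * m + k + 4) := by nlinarith
  rw [hB]
  omega
end

section
/- If G is a triangle-free graph with m edges, then the spectral radius of G satisfies λ(G) ≤ √m. -/
open Classical in
noncomputable def adjMat {V : Type*} [Fintype V] (G : SimpleGraph V) : Matrix V V ℝ :=
  Matrix.of fun i j => if G.Adj i j then 1 else 0

theorem adjMat_isHermitian {V : Type*} [Fintype V] (G : SimpleGraph V) :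
    (adjMat G).IsHermitian := by
  ext i j
  simp only [adjMat, Matrix.conjTranspose_apply, Matrix.of_apply, starRingEnd_apply]
  rw [G.adj_comm]
  simp

/-- Spectral radius: the largest adjacency eigenvalue. -/
noncomputable def specRad {V : Type*} [Fintype V] [DecidableEq V] (G : SimpleGraph V) : ℝ :=
  ⨆ i, (adjMat_isHermitian G).eigenvalues i

/-- `G` contains a cycle of length `ℓ`. -/
def hasCycle {V : Type*} (G : SimpleGraph V) (ℓ : ℕ) : Prop :=
  ∃ (v : V) (w : G.Walk v v), w.IsCycle ∧ w.length = ℓ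

lemma adjMat_nonneg {V : Type*} [Fintype V] (G : SimpleGraph V) (i j : V) :
    0 ≤ adjMat G i j := by
  simp only [adjMat, Matrix.of_apply]
  split <;> norm_num

/-- For a triangle-free graph, row sums of the square of the adjacency matrix are at most the
number of edges. -/
lemma rowsum_le {n : ℕ} (G : SimpleGraph (Fin n)) [DecidableRel G.Adj]
    (h : G.CliqueFree 3) (k : Fin n) :
    ∑ j, (adjMat G * adjMat G) k j ≤ (G.edgeFinset.card : ℝ) := by
  classical
  have hsum : ∑ j, (adjMat G * adjMat G) k j
      = ((Finset.univ.filter (fun p : Fin n × Fin n => G.Adj k p.1 ∧ G.Adj p.1 p.2)).card : ℝ) := by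
    simp only [Matrix.mul_apply, adjMat, Matrix.of_apply, ite_mul, one_mul, zero_mul]
    rw [Finset.sum_comm]
    rw [← Finset.sum_boole]
    rw [← Finset.sum_product']
    refine Finset.sum_congr rfl fun x _ => ?_
    simp only [ite_and]
    congr
  rw [hsum]
  norm_cast
  apply Finset.card_le_card_of_injOn (fun p => s(p.1, p.2))
  · intro p hp
    simp only [Finset.coe_filter, Finset.mem_filter, Finset.mem_univ, true_and, Set.mem_setOf_eq] at hp
    simp only [Finset.mem_coe, SimpleGraph.mem_edgeFinset, SimpleGraph.mem_edgeSet]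
    exact hp.2
  · intro p hp q hq hpq
    simp only [Finset.coe_filter, Set.mem_setOf_eq, Finset.mem_univ, true_and] at hp hq
    rw [Sym2.eq_iff] at hpq
    rcases hpq with ⟨h1, h2⟩ | ⟨h1, h2⟩
    · exact Prod.ext h1 h2
    · exfalso
      apply h {k, p.1, p.2}
      rw [SimpleGraph.is3Clique_triple_iff]
      exact ⟨hp.1, by rw [h2]; exact hq.1, hp.2⟩

open Matrix in
/-- Squares of adjacency eigenvalues of a triangle-free graph are at most the number of edges. -/
lemma eig_sq_le {n : ℕ} (G : SimpleGraph (Fin n)) [DecidableRel G.Adj]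
    (h : G.CliqueFree 3) (i : Fin n) :
    ((adjMat_isHermitian G).eigenvalues i)^2 ≤ (G.edgeFinset.card : ℝ) := by
  classical
  set hA := adjMat_isHermitian G
  set μ := hA.eigenvalues i with hmu
  have hev : adjMat G *ᵥ (hA.eigenvectorBasis i : EuclideanSpace ℝ (Fin n))
      = μ • (hA.eigenvectorBasis i : EuclideanSpace ℝ (Fin n)) := hA.mulVec_eigenvectorBasis i
  set v : Fin n → ℝ := WithLp.ofLp (hA.eigenvectorBasis i : EuclideanSpace ℝ (Fin n)) with hv
  have hvne : v ≠ 0 := by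
    intro h0
    have h1 : hA.eigenvectorBasis i = 0 := by
      ext j
      exact congrFun h0 j
    exact hA.eigenvectorBasis.toBasis.ne_zero i (by simpa using h1)
  have hev2 : Module.End.HasEigenvalue (Matrix.toLin' (adjMat G * adjMat G)) (μ^2) := by
    apply Module.End.hasEigenvalue_of_hasEigenvector (x := v)
    refine ⟨Module.End.mem_eigenspace_iff.2 ?_, hvne⟩
    rw [Matrix.toLin'_apply, ← Matrix.mulVec_mulVec, hev, Matrix.mulVec_smul, hev, smul_smul,
      sq]
  obtain ⟨k, hk⟩ := eigenvalue_mem_ball hev2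
  rw [Real.closedBall_eq_Icc, Set.mem_Icc] at hk
  calc μ^2 ≤ (adjMat G * adjMat G) k k + ∑ j ∈ Finset.univ.erase k, ‖(adjMat G * adjMat G) k j‖ :=
        hk.2
    _ = ∑ j, (adjMat G * adjMat G) k j := by
        have hnn : ∀ a b : Fin n, 0 ≤ (adjMat G * adjMat G) a b := fun a b => by
          rw [Matrix.mul_apply]
          exact Finset.sum_nonneg fun l _ => mul_nonneg (adjMat_nonneg G a l) (adjMat_nonneg G l b)
        rw [← Finset.add_sum_erase _ _ (Finset.mem_univ k)]
        congr 1
        exact Finset.sum_congr rfl fun j _ => Real.norm_of_nonneg (hnn k j)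
    _ ≤ (G.edgeFinset.card : ℝ) := rowsum_le G h k

/-- Nosal's theorem: a triangle-free graph with `m` edges has spectral radius at most `√m`. -/
theorem nosal {n : ℕ} (G : SimpleGraph (Fin n)) [DecidableRel G.Adj]
    (h : G.CliqueFree 3) :
    specRad G ≤ Real.sqrt (G.edgeFinset.card) := by
  apply Real.iSup_le _ (Real.sqrt_nonneg _)
  intro i
  have h2 := eig_sq_le G h i
  calc (adjMat_isHermitian G).eigenvalues i ≤ |(adjMat_isHermitian G).eigenvalues i| :=
        le_abs_self _
    _ = Real.sqrt (((adjMat_isHermitian G).eigenvalues i)^2) := (Real.sqrt_sq_eq_abs _).symm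
    _ ≤ Real.sqrt (G.edgeFinset.card) := Real.sqrt_le_sqrt h2
end

section
/- For any graph G and any vertex v of G, λ(G - v)² ≥ λ(G)² - 2·d(v), where d(v) is the degree of v. -/
open Matrix

section SpectralHelpers

set_option linter.unusedSectionVars false

variable {ι : Type*} [Fintype ι] [DecidableEq ι]

lemma dot_mulVec' (U : Matrix ι ι ℝ) (a b : ι → ℝ) :
    a ⬝ᵥ (U *ᵥ b) = (Uᵀ *ᵥ a) ⬝ᵥ b := by
  rw [Matrix.dotProduct_mulVec, Matrix.mulVec_transpose]

lemma spec_coords {M : Matrix ι ι ℝ} (hM : M.IsHermitian) (x : ι → ℝ) :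
    ∃ y : ι → ℝ, (x ⬝ᵥ x = ∑ i, y i ^ 2) ∧ (x ⬝ᵥ (M *ᵥ x) = ∑ i, hM.eigenvalues i * y i ^ 2)
      ∧ ((M *ᵥ x) ⬝ᵥ (M *ᵥ x) = ∑ i, hM.eigenvalues i ^ 2 * y i ^ 2) := by
  set U : Matrix ι ι ℝ := (Matrix.IsHermitian.eigenvectorUnitary hM : Matrix ι ι ℝ) with hU
  have hUt : star U = Uᵀ := by
    rw [Matrix.star_eq_conjTranspose, Matrix.conjTranspose]
    ext i j; simp
  have hUU : Uᵀ * U = 1 := by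
    rw [← hUt]; exact (Matrix.mem_unitaryGroup_iff').mp (Matrix.IsHermitian.eigenvectorUnitary hM).2
  have hUU' : U * Uᵀ = 1 := by
    rw [← hUt]; exact (Matrix.mem_unitaryGroup_iff).mp (Matrix.IsHermitian.eigenvectorUnitary hM).2
  set y : ι → ℝ := Uᵀ *ᵥ x with hy
  have hspec : M = U * Matrix.diagonal hM.eigenvalues * Uᵀ := by
    have := hM.spectral_theorem
    rw [Unitary.conjStarAlgAut_apply, ← hU, hUt] at this
    simpa using this
  have hdot : ∀ b : ι → ℝ, x ⬝ᵥ (U *ᵥ b) = y ⬝ᵥ b := fun b => dot_mulVec' U x b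
  have hxy : x ⬝ᵥ x = y ⬝ᵥ y := by
    have : x ⬝ᵥ x = x ⬝ᵥ (U *ᵥ (Uᵀ *ᵥ x)) := by
      rw [Matrix.mulVec_mulVec, hUU', Matrix.one_mulVec]
    rw [this, hdot]
  refine ⟨y, ?_, ?_, ?_⟩
  · rw [hxy]; simp [dotProduct, sq]
  · have : M *ᵥ x = U *ᵥ (Matrix.diagonal hM.eigenvalues *ᵥ y) := by
      have h0 := congrArg (fun N => N *ᵥ x) hspec
      simpa [Matrix.mul_assoc, ← Matrix.mulVec_mulVec, hy] using h0
    rw [this, hdot]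
    simp [dotProduct, Matrix.mulVec_diagonal, sq]; ring_nf
    exact Finset.sum_congr rfl fun i _ => by ring
  · have h1 : M *ᵥ x = U *ᵥ (Matrix.diagonal hM.eigenvalues *ᵥ y) := by
      have h0 := congrArg (fun N => N *ᵥ x) hspec
      simpa [Matrix.mul_assoc, ← Matrix.mulVec_mulVec, hy] using h0
    rw [h1, dot_mulVec', Matrix.mulVec_mulVec, hUU, Matrix.one_mulVec]
    simp [dotProduct, Matrix.mulVec_diagonal, sq]
    exact Finset.sum_congr rfl fun i _ => by ring

lemma rayleigh_le [Nonempty ι] {M : Matrix ι ι ℝ} (hM : M.IsHermitian) (x : ι → ℝ) :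
    x ⬝ᵥ (M *ᵥ x) ≤ (⨆ i, hM.eigenvalues i) * (x ⬝ᵥ x) := by
  obtain ⟨y, h1, h2, _⟩ := spec_coords hM x
  rw [h1, h2, Finset.mul_sum]
  refine Finset.sum_le_sum fun i _ => ?_
  exact mul_le_mul_of_nonneg_right
    (le_ciSup (Set.Finite.bddAbove (Set.finite_range _)) i) (sq_nonneg _)

lemma eigvec_dot_self {M : Matrix ι ι ℝ} (hM : M.IsHermitian) (j : ι) :
    (⇑(hM.eigenvectorBasis j) : ι → ℝ) ⬝ᵥ ⇑(hM.eigenvectorBasis j) = 1 := by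
  have h1 : ‖hM.eigenvectorBasis j‖ = 1 := hM.eigenvectorBasis.orthonormal.1 j
  have h2 := EuclideanSpace.norm_eq (hM.eigenvectorBasis j)
  rw [h1] at h2
  have h3 : ∑ i, ‖(hM.eigenvectorBasis j) i‖ ^ 2 = 1 := by
    have := congrArg (· ^ 2) h2
    simpa [Real.sq_sqrt (Finset.sum_nonneg fun i _ => sq_nonneg _)] using this.symm
  rw [← h3]
  refine Finset.sum_congr rfl fun i _ => ?_
  simp [sq, abs_mul_abs_self]

lemma abs_eig_le [Nonempty ι] {M : Matrix ι ι ℝ} (hM : M.IsHermitian)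
    (h0 : ∀ i j, 0 ≤ M i j) (j : ι) :
    |hM.eigenvalues j| ≤ ⨆ i, hM.eigenvalues i := by
  set w : ι → ℝ := ⇑(hM.eigenvectorBasis j) with hwdef
  have hw : M *ᵥ w = hM.eigenvalues j • w := hM.mulVec_eigenvectorBasis j
  have hnorm : w ⬝ᵥ w = 1 := eigvec_dot_self hM j
  have hR : w ⬝ᵥ (M *ᵥ w) = hM.eigenvalues j := by
    rw [hw, dotProduct_smul, hnorm]; simp
  rw [abs_le]
  set u : ι → ℝ := fun i => |w i| with hu
  have h3 : u ⬝ᵥ u = 1 := by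
    rw [← hnorm]; exact Finset.sum_congr rfl fun i _ => abs_mul_abs_self _
  have h4 : -(w ⬝ᵥ (M *ᵥ w)) ≤ u ⬝ᵥ (M *ᵥ u) := by
    simp only [dotProduct, Matrix.mulVec, ← Finset.sum_neg_distrib]
    refine Finset.sum_le_sum fun i _ => ?_
    show -(w i * ∑ k, M i k * w k) ≤ u i * ∑ k, M i k * u k
    rw [Finset.mul_sum, Finset.mul_sum, ← Finset.sum_neg_distrib]
    refine Finset.sum_le_sum fun k _ => ?_
    calc -(w i * (M i k * w k)) = M i k * (-(w i * w k)) := by ring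
      _ ≤ M i k * |w i * w k| := mul_le_mul_of_nonneg_left (neg_le_abs _) (h0 i k)
      _ = u i * (M i k * u k) := by rw [hu]; simp only [abs_mul]; ring
  have h5 := rayleigh_le hM u
  rw [h3, mul_one] at h5
  constructor
  · rw [hR] at h4; linarith
  · exact le_ciSup (Set.Finite.bddAbove (Set.finite_range _)) j

lemma mulVec_sq_le [Nonempty ι] {M : Matrix ι ι ℝ} (hM : M.IsHermitian)
    (h0 : ∀ i j, 0 ≤ M i j) (x : ι → ℝ) :
    (M *ᵥ x) ⬝ᵥ (M *ᵥ x) ≤ (⨆ i, hM.eigenvalues i) ^ 2 * (x ⬝ᵥ x) := by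
  obtain ⟨y, h1, _, h3⟩ := spec_coords hM x
  rw [h1, h3, Finset.mul_sum]
  refine Finset.sum_le_sum fun i _ => mul_le_mul_of_nonneg_right ?_ (sq_nonneg _)
  have := abs_eig_le hM h0 i
  rw [abs_le] at this
  exact sq_le_sq' this.1 this.2

lemma sum_split {n : ℕ} (v : Fin n) (f : Fin n → ℝ) :
    ∑ j, f j = f v + ∑ j : ({v}ᶜ : Set (Fin n)), f j := by
  classical
  rw [← Finset.sum_compl_add_sum {v} f, Finset.sum_singleton, add_comm]
  congr 1
  exact Finset.sum_subtype _ (by simp) f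

lemma adjMat_induce_eq {n : ℕ} (G : SimpleGraph (Fin n))
    (v : Fin n) (i j : ({v}ᶜ : Set (Fin n))) :
    adjMat (G.induce ({v}ᶜ : Set (Fin n))) i j = adjMat G i.1 j.1 := by
  simp [adjMat, SimpleGraph.induce, SimpleGraph.comap]
  congr 1

lemma adjMat_row_sum {n : ℕ} (G : SimpleGraph (Fin n)) [DecidableRel G.Adj] (v : Fin n) :
    ∑ j, adjMat G v j = (G.degree v : ℝ) := by
  simp only [adjMat, Matrix.of_apply, SimpleGraph.degree, SimpleGraph.neighborFinset_eq_filter]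
  rw [@Finset.sum_boole _ _ _ (G.Adj v) (Classical.decPred _) Finset.univ]
  exact congrArg _ (congrArg Finset.card (Finset.filter_congr_decidable _ _ _))

end SpectralHelpers

set_option maxHeartbeats 1000000 in
/-- Deleting a vertex `v` decreases the square of the spectral radius by at most `2·d(v)`. -/
theorem specRad_sq_delete_vertex {n : ℕ} (G : SimpleGraph (Fin n)) [DecidableRel G.Adj]
    (v : Fin n) :
    (specRad G) ^ 2 - 2 * (G.degree v : ℝ) ≤ (specRad (G.induce ({v}ᶜ : Set (Fin n)))) ^ 2 := by
  have hne : Nonempty (Fin n) := ⟨v⟩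
  have hA := adjMat_isHermitian G
  obtain ⟨i0, hi0⟩ := Finite.exists_max hA.eigenvalues
  have hlam_eq : specRad G = hA.eigenvalues i0 :=
    le_antisymm (ciSup_le hi0) (le_ciSup (Set.Finite.bddAbove (Set.finite_range _)) i0)
  set lam : ℝ := specRad G with hlamdef
  set x : Fin n → ℝ := ⇑(hA.eigenvectorBasis i0) with hxdef
  have hx : adjMat G *ᵥ x = lam • x := by
    rw [hlam_eq]; exact hA.mulVec_eigenvectorBasis i0
  have hx1 : x ⬝ᵥ x = 1 := eigvec_dot_self hA i0
  set H := G.induce ({v}ᶜ : Set (Fin n)) with hHdef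
  have hB := adjMat_isHermitian H
  set mu : ℝ := specRad H with hmudef
  have hmu_eq : mu = ⨆ i, hB.eigenvalues i := rfl
  set z : ({v}ᶜ : Set (Fin n)) → ℝ := fun i => x i.1 with hzdef
  set a : ({v}ᶜ : Set (Fin n)) → ℝ := fun i => adjMat G v i.1 with hadef
  set c : ℝ := x v with hcdef
  set d : ℝ := (G.degree v : ℝ) with hddef
  set Z : ℝ := z ⬝ᵥ z with hZdef
  have hAvv : adjMat G v v = 0 := by simp [adjMat]
  have hAsymm : ∀ i j, adjMat G i j = adjMat G j i := by
    intro i j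
    simp only [adjMat, Matrix.of_apply]
    rw [G.adj_comm]
  -- eigen equation at v
  have h2 : lam * c = a ⬝ᵥ z := by
    have hv := congrFun hx v
    have hsum : (adjMat G *ᵥ x) v = ∑ j, adjMat G v j * x j := rfl
    rw [hsum, sum_split v (fun j => adjMat G v j * x j)] at hv
    simp only [hAvv, zero_mul, zero_add] at hv
    exact hv.symm
  -- eigen equation at i ∈ compl
  have h3 : ∀ i : ({v}ᶜ : Set (Fin n)), (adjMat H *ᵥ z) i = lam * z i - c * a i := by
    intro i
    have hi := congrFun hx i.1
    have hsum : (adjMat G *ᵥ x) i.1 = ∑ j, adjMat G i.1 j * x j := rfl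
    rw [hsum, sum_split v (fun j => adjMat G i.1 j * x j)] at hi
    have hBz : (adjMat H *ᵥ z) i = ∑ j : ({v}ᶜ : Set (Fin n)), adjMat G i.1 j.1 * x j.1 := by
      simp only [Matrix.mulVec, dotProduct]
      exact Finset.sum_congr rfl fun j _ => by rw [adjMat_induce_eq]
    have hPi : (lam • x) i.1 = lam * z i := rfl
    rw [hPi] at hi
    rw [hBz]
    have : adjMat G i.1 v * x v = c * a i := by
      rw [hAsymm i.1 v]; simp [hadef, hcdef]; ring
    rw [this] at hi
    linarith [hi]
  -- degree identity
  have h4 : a ⬝ᵥ a = d := by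
    have hrow := adjMat_row_sum G v
    rw [sum_split v (fun j => adjMat G v j)] at hrow
    rw [hAvv, zero_add] at hrow
    rw [hddef, ← hrow]
    refine Finset.sum_congr rfl fun i _ => ?_
    simp only [hadef, adjMat, Matrix.of_apply]
    by_cases h : G.Adj v i.1 <;> simp [h]
  have hZ0 : (0:ℝ) ≤ Z := Finset.sum_nonneg fun i _ => mul_self_nonneg _
  have hd0 : (0:ℝ) ≤ d := Nat.cast_nonneg _
  have hc1 : c ^ 2 + Z = 1 := by
    have h := hx1
    rw [show x ⬝ᵥ x = ∑ j, x j * x j from rfl, sum_split v (fun j => x j * x j)] at h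
    have hzz : Z = ∑ j : ({v}ᶜ : Set (Fin n)), x j.1 * x j.1 := rfl
    rw [hzz, sq]
    linarith [h]
  -- Cauchy–Schwarz
  have hcs : (lam * c) ^ 2 ≤ d * Z := by
    rw [h2]
    have := Finset.sum_mul_sq_le_sq_mul_sq Finset.univ a z
    calc (a ⬝ᵥ z) ^ 2 = (∑ i, a i * z i) ^ 2 := rfl
      _ ≤ (∑ i, a i ^ 2) * ∑ i, z i ^ 2 := this
      _ = d * Z := by
          rw [← h4, hZdef]
          congr 1 <;> exact Finset.sum_congr rfl fun i _ => (sq _)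
  -- norm of B z
  have hW : (adjMat H *ᵥ z) ⬝ᵥ (adjMat H *ᵥ z)
      = lam ^ 2 * Z - 2 * (lam * c) ^ 2 + d * c ^ 2 := by
    have e1 : (adjMat H *ᵥ z) ⬝ᵥ (adjMat H *ᵥ z)
        = ∑ i, (lam * z i - c * a i) * (lam * z i - c * a i) :=
      Finset.sum_congr rfl fun i _ => by rw [h3 i]
    have e2 : ∀ i : ({v}ᶜ : Set (Fin n)), (lam * z i - c * a i) * (lam * z i - c * a i)
        = lam ^ 2 * (z i * z i) - 2 * lam * c * (a i * z i) + c ^ 2 * (a i * a i) := by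
      intro i; ring
    rw [e1, Finset.sum_congr rfl fun i _ => e2 i]
    rw [Finset.sum_add_distrib, Finset.sum_sub_distrib, ← Finset.mul_sum, ← Finset.mul_sum,
      ← Finset.mul_sum]
    have e3 : ∑ i, a i * z i = a ⬝ᵥ z := rfl
    have e4 : ∑ i : ({v}ᶜ : Set (Fin n)), z i * z i = Z := rfl
    have e5 : ∑ i : ({v}ᶜ : Set (Fin n)), a i * a i = a ⬝ᵥ a := rfl
    rw [e3, ← h2, e4, e5, h4]
    ring
  -- case split on Z
  rcases eq_or_lt_of_le hZ0 with hZeq | hZpos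
  · -- Z = 0
    have hlc : (lam * c) ^ 2 ≤ 0 := by rw [← hZeq] at hcs; linarith
    have hlc0 : lam * c = 0 := by nlinarith [sq_nonneg (lam * c)]
    have hc2 : c ^ 2 = 1 := by rw [← hZeq] at hc1; linarith
    have hlam2 : lam ^ 2 = 0 := by
      have : lam ^ 2 * c ^ 2 = 0 := by nlinarith
      rw [hc2, mul_one] at this; exact this
    nlinarith [sq_nonneg mu, hd0]
  · -- Z > 0
    have hnes : Nonempty (({v}ᶜ : Set (Fin n))) := by
      by_contra hcon
      rw [not_nonempty_iff] at hcon
      have : Z = 0 := by simp [hZdef, dotProduct]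
      linarith
    have hpos : ∀ i j, 0 ≤ adjMat H i j := by
      intro i j
      simp only [adjMat, Matrix.of_apply]
      split <;> norm_num
    have hkey := mulVec_sq_le hB hpos z
    rw [← hmu_eq, ← hZdef, hW] at hkey
    nlinarith [hkey, hcs, hc1, hZpos, hd0, mul_nonneg hd0 (sq_nonneg c),
      mul_pos hZpos hZpos]
end

section
/- Let G be a connected graph with Perron eigenvector x (positive eigenvector of the adjacency matrix for λ(G)). Let u, v be vertices and w_1, …, w_s be neighbors of v that are not neighbors of u (and distinct from u). Let G' be obtained from G by deleting the edges vw_i and adding the edges uw_i for 1 ≤ i ≤ s, with s ≥ 1. If x_u ≥ x_v, then λ(G') > λ(G). -/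
open Matrix in
lemma rayleigh_le_sup_eigenvalues {m : Type*} [Fintype m] [DecidableEq m] [Nonempty m]
    {M : Matrix m m ℝ} (hM : M.IsHermitian) (y : m → ℝ) :
    y ⬝ᵥ M *ᵥ y ≤ (⨆ i, hM.eigenvalues i) * (y ⬝ᵥ y) := by
  classical
  set U : Matrix m m ℝ := (hM.eigenvectorUnitary : Matrix m m ℝ) with hU
  set d : m → ℝ := hM.eigenvalues with hd
  have hUT : star U = Uᵀ := by
    ext i j; simp [Matrix.star_apply]
  have hsp : M = U * Matrix.diagonal d * Uᵀ := by
    rw [← hUT]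
    simpa [RCLike.ofReal_real_eq_id] using hM.spectral_theorem
  have hUU : U * Uᵀ = 1 := by
    rw [← hUT]
    exact Matrix.mem_unitaryGroup_iff.mp hM.eigenvectorUnitary.2
  set z : m → ℝ := Uᵀ *ᵥ y with hz
  have hdot : ∀ (wv : m → ℝ), y ⬝ᵥ U *ᵥ wv = z ⬝ᵥ wv := by
    intro wv
    rw [Matrix.dotProduct_mulVec, ← Matrix.mulVec_transpose]
  have h1 : y ⬝ᵥ M *ᵥ y = ∑ i, d i * z i ^ 2 := by
    rw [hsp, ← Matrix.mulVec_mulVec, ← Matrix.mulVec_mulVec, hdot, ← hz]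
    simp [dotProduct, Matrix.mulVec_diagonal]
    ring_nf
    exact Finset.sum_congr rfl (fun i _ => by ring)
  have h2 : y ⬝ᵥ y = ∑ i, z i ^ 2 := by
    have : y ⬝ᵥ y = y ⬝ᵥ (U * Uᵀ) *ᵥ y := by rw [hUU]; simp
    rw [this, ← Matrix.mulVec_mulVec, hdot, ← hz]
    simp [dotProduct, sq]
  rw [h1, h2, Finset.mul_sum]
  apply Finset.sum_le_sum
  intro i _
  have hle : d i ≤ ⨆ j, d j := le_ciSup (Set.Finite.bddAbove (Set.finite_range d)) i
  nlinarith [sq_nonneg (z i)]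

open Matrix in
/-- Wu–Xiao–Hong rotation lemma: if `x` is the positive Perron eigenvector of a connected
graph `G`, `w 1, …, w s` are neighbors of `v` that are neither neighbors of `u` nor equal
to `u`, and `x u ≥ x v`, then moving the edges `v wᵢ` to `u wᵢ` strictly increases the
spectral radius. -/
theorem rotation_increases_specRad {n : ℕ} (G : SimpleGraph (Fin n))
    (hconn : G.Connected) (x : Fin n → ℝ) (hx : ∀ i, 0 < x i)
    (hEig : (adjMat G).mulVec x = specRad G • x)
    (u v : Fin n) (s : ℕ) (hs : 1 ≤ s) (w : Fin s → Fin n)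
    (hinj : Function.Injective w)
    (hwv : ∀ i, G.Adj v (w i))
    (hwu : ∀ i, ¬ G.Adj u (w i) ∧ w i ≠ u)
    (hxuv : x v ≤ x u) :
    specRad G < specRad (SimpleGraph.fromEdgeSet
      ((G.edgeSet \ {e | ∃ i, e = s(v, w i)}) ∪ {e | ∃ i, e = s(u, w i)})) := by
  classical
  have hne : Nonempty (Fin n) := hconn.nonempty
  set G' := SimpleGraph.fromEdgeSet
      ((G.edgeSet \ {e | ∃ i, e = s(v, w i)}) ∪ {e | ∃ i, e = s(u, w i)}) with hG'
  set lam := specRad G with hlam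
  set lam' := specRad G' with hlam'
  have i0 : Fin s := ⟨0, hs⟩
  have huv : u ≠ v := by
    intro h
    exact (hwu i0).1 (h ▸ hwv i0)
  have hwv' : ∀ i, w i ≠ v := fun i => (hwv i).ne'
  have hwu' : ∀ i, w i ≠ u := fun i => (hwu i).2
  -- the difference matrix
  set D : Matrix (Fin n) (Fin n) ℝ := Matrix.of fun a b =>
    (if (a = u ∧ ∃ i, b = w i) ∨ (b = u ∧ ∃ i, a = w i) then (1:ℝ) else 0)
    - (if (a = v ∧ ∃ i, b = w i) ∨ (b = v ∧ ∃ i, a = w i) then (1:ℝ) else 0) with hD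
  have hA' : adjMat G' = adjMat G + D := by
    ext a b
    simp only [adjMat, Matrix.of_apply, Matrix.add_apply, hD]
    by_cases hP1 : (a = u ∧ ∃ i, b = w i) ∨ (b = u ∧ ∃ i, a = w i)
    · have hnP2 : ¬ ((a = v ∧ ∃ i, b = w i) ∨ (b = v ∧ ∃ i, a = w i)) := by
        rcases hP1 with ⟨rfl, i, rfl⟩ | ⟨rfl, i, rfl⟩ <;>
          rintro (⟨h1, j, h2⟩ | ⟨h1, j, h2⟩) <;>
            first
            | exact huv (h1 ▸ rfl)
            | exact hwv' _ h1
            | exact hwu' _ h2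
            | exact huv h1.symm
      have hnG : ¬ G.Adj a b := by
        rcases hP1 with ⟨rfl, i, rfl⟩ | ⟨rfl, i, rfl⟩
        · exact (hwu i).1
        · exact fun h => (hwu i).1 h.symm
      have hG'adj : G'.Adj a b := by
        rw [hG', SimpleGraph.fromEdgeSet_adj]
        rcases hP1 with ⟨rfl, i, rfl⟩ | ⟨rfl, i, rfl⟩
        · exact ⟨Or.inr ⟨i, rfl⟩, (hwu' i ·.symm)⟩
        · exact ⟨Or.inr ⟨i, Sym2.eq_swap⟩, hwu' i⟩
      simp [hP1, hnP2, hnG, hG'adj]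
    · by_cases hP2 : (a = v ∧ ∃ i, b = w i) ∨ (b = v ∧ ∃ i, a = w i)
      · have hGadj : G.Adj a b := by
          rcases hP2 with ⟨rfl, i, rfl⟩ | ⟨rfl, i, rfl⟩
          · exact hwv i
          · exact (hwv i).symm
        have hnG' : ¬ G'.Adj a b := by
          rw [hG', SimpleGraph.fromEdgeSet_adj]
          rintro ⟨(⟨hmem, hnot⟩ | ⟨i, hi⟩), hab⟩
          · apply hnot
            rcases hP2 with ⟨rfl, i, rfl⟩ | ⟨rfl, i, rfl⟩
            · exact ⟨i, rfl⟩
            · exact ⟨i, Sym2.eq_swap⟩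
          · rw [Sym2.eq_iff] at hi
            apply hP1
            rcases hi with ⟨rfl, rfl⟩ | ⟨rfl, rfl⟩
            · exact Or.inl ⟨rfl, i, rfl⟩
            · exact Or.inr ⟨rfl, i, rfl⟩
        simp [hP1, hP2, hGadj, hnG']
      · have hiff : G'.Adj a b ↔ G.Adj a b := by
          rw [hG', SimpleGraph.fromEdgeSet_adj]
          constructor
          · rintro ⟨(⟨hmem, _⟩ | ⟨i, hi⟩), hab⟩
            · exact hmem
            · rw [Sym2.eq_iff] at hi
              exfalso; apply hP1
              rcases hi with ⟨rfl, rfl⟩ | ⟨rfl, rfl⟩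
              · exact Or.inl ⟨rfl, i, rfl⟩
              · exact Or.inr ⟨rfl, i, rfl⟩
          · intro h
            refine ⟨Or.inl ⟨h, ?_⟩, h.ne⟩
            rintro ⟨i, hi⟩
            rw [Sym2.eq_iff] at hi
            apply hP2
            rcases hi with ⟨rfl, rfl⟩ | ⟨rfl, rfl⟩
            · exact Or.inl ⟨rfl, i, rfl⟩
            · exact Or.inr ⟨rfl, i, rfl⟩
        simp [hP1, hP2, hiff]
  -- rest of the proof
  haveI := hne
  set S : ℝ := ∑ i, x (w i) with hSdef
  have hS : 0 < S := Finset.sum_pos (fun i _ => hx (w i)) ⟨i0, Finset.mem_univ i0⟩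
  have hind : ∀ f : Fin n → ℝ, (∑ b, if ∃ i, b = w i then f b else 0) = ∑ i, f (w i) := by
    intro f
    have himg : Finset.univ.filter (fun b => ∃ i, b = w i) = Finset.image w Finset.univ := by
      ext b; simp [eq_comm]
    rw [Finset.sum_ite, Finset.sum_const_zero, add_zero, himg,
      Finset.sum_image (fun a _ b _ h => hinj h)]
  have hDu : (D *ᵥ x) u = S := by
    have hDub : ∀ b, D u b = if ∃ i, b = w i then 1 else 0 := by
      intro b
      simp only [hD, Matrix.of_apply]
      have h2 : ¬ ((u = v ∧ ∃ i, b = w i) ∨ (b = v ∧ ∃ i, u = w i)) := by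
        rintro (⟨h, _⟩ | ⟨_, i, h⟩)
        · exact huv h
        · exact hwu' i h.symm
      have hnot : ¬ (b = u ∧ ∃ i, u = w i) := by
        rintro ⟨_, i, h⟩; exact hwu' i h.symm
      rw [if_neg h2, sub_zero]
      by_cases hb : ∃ i, b = w i <;> simp [hb, hnot]
    have : (D *ᵥ x) u = ∑ b, (if ∃ i, b = w i then (1:ℝ) else 0) * x b := by
      simp only [Matrix.mulVec, dotProduct, hDub]
    rw [this]
    simp only [ite_mul, one_mul, zero_mul]
    exact hind x
  -- quadratic form of the indicator part
  have hP : ∀ p : Fin n, (∀ i, w i ≠ p) →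
      (∑ a, ∑ b, x a * (if (a = p ∧ ∃ i, b = w i) ∨ (b = p ∧ ∃ i, a = w i) then (1:ℝ) else 0)
        * x b) = 2 * x p * S := by
    intro p hp
    have hterm : ∀ a b : Fin n,
        x a * (if (a = p ∧ ∃ i, b = w i) ∨ (b = p ∧ ∃ i, a = w i) then (1:ℝ) else 0) * x b
        = (if a = p then (if ∃ i, b = w i then x p * x b else 0) else 0)
          + (if b = p then (if ∃ i, a = w i then x a * x p else 0) else 0) := by
      intro a b
      by_cases hap : a = p
      · subst hap
        have haw : ¬ ∃ i, a = w i := fun ⟨i, h⟩ => hp i h.symm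
        by_cases hbw : ∃ i, b = w i
        · have hbp : ¬ b = a := fun h => (fun (⟨i, hi⟩ : ∃ i, a = w i) => hp i hi.symm) (h ▸ hbw)
          simp [hbw, haw, hbp]
        · by_cases hbp : b = a <;> simp [hbw, haw, hbp]
      · by_cases hbp : b = p
        · subst hbp
          have hbw : ¬ ∃ i, b = w i := fun ⟨i, h⟩ => hp i h.symm
          by_cases haw : ∃ i, a = w i <;> simp [hap, hbw, haw, mul_comm]
        · by_cases hbw : ∃ i, b = w i <;> by_cases haw : ∃ i, a = w i <;>
            simp [hap, hbp, hbw, haw]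
    calc (∑ a, ∑ b, x a * (if (a = p ∧ ∃ i, b = w i) ∨ (b = p ∧ ∃ i, a = w i) then (1:ℝ) else 0)
        * x b)
        = (∑ a, ∑ b, ((if a = p then (if ∃ i, b = w i then x p * x b else 0) else 0)
          + (if b = p then (if ∃ i, a = w i then x a * x p else 0) else 0))) := by
          exact Finset.sum_congr rfl fun a _ => Finset.sum_congr rfl fun b _ => hterm a b
      _ = (∑ a, ∑ b, (if a = p then (if ∃ i, b = w i then x p * x b else 0) else 0))
          + (∑ a, ∑ b, (if b = p then (if ∃ i, a = w i then x a * x p else 0) else 0)) := by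
          rw [← Finset.sum_add_distrib]
          exact Finset.sum_congr rfl fun a _ => Finset.sum_add_distrib
      _ = (∑ b, if ∃ i, b = w i then x p * x b else 0)
          + (∑ a, if ∃ i, a = w i then x a * x p else 0) := by
          congr 1
          · rw [Finset.sum_comm]
            rw [show (∑ b, ∑ a, (if a = p then (if ∃ i, b = w i then x p * x b else 0) else 0))
              = ∑ b, (if ∃ i, b = w i then x p * x b else 0) from
              Finset.sum_congr rfl fun b _ => Finset.sum_ite_eq' Finset.univ p _ |>.trans (by simp)]
          · exact Finset.sum_congr rfl fun a _ =>
              (Finset.sum_ite_eq' Finset.univ p _).trans (by simp)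
      _ = 2 * x p * S := by
          rw [hind (fun b => x p * x b), hind (fun a => x a * x p), hSdef, Finset.mul_sum,
            ← Finset.sum_add_distrib]
          exact Finset.sum_congr rfl fun i _ => by ring
  have hquad : x ⬝ᵥ D *ᵥ x = 2 * (x u - x v) * S := by
    have hexp : x ⬝ᵥ D *ᵥ x = ∑ a, ∑ b, x a * D a b * x b := by
      simp only [dotProduct, Matrix.mulVec, Finset.mul_sum]
      exact Finset.sum_congr rfl fun a _ => Finset.sum_congr rfl fun b _ => by ring
    rw [hexp]
    have : ∀ a b : Fin n, x a * D a b * x b =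
        x a * (if (a = u ∧ ∃ i, b = w i) ∨ (b = u ∧ ∃ i, a = w i) then (1:ℝ) else 0) * x b
        - x a * (if (a = v ∧ ∃ i, b = w i) ∨ (b = v ∧ ∃ i, a = w i) then (1:ℝ) else 0) * x b := by
      intro a b; simp only [hD, Matrix.of_apply]; ring
    calc (∑ a, ∑ b, x a * D a b * x b)
        = (∑ a, ∑ b, x a * (if (a = u ∧ ∃ i, b = w i) ∨ (b = u ∧ ∃ i, a = w i) then (1:ℝ) else 0) * x b)
          - (∑ a, ∑ b, x a * (if (a = v ∧ ∃ i, b = w i) ∨ (b = v ∧ ∃ i, a = w i) then (1:ℝ) else 0) * x b) := by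
          rw [← Finset.sum_sub_distrib]
          exact Finset.sum_congr rfl fun a _ => by
            rw [← Finset.sum_sub_distrib]
            exact Finset.sum_congr rfl fun b _ => this a b
      _ = 2 * x u * S - 2 * x v * S := by rw [hP u (fun i => hwu' i), hP v (fun i => hwv' i)]
      _ = 2 * (x u - x v) * S := by ring
  have hxx : 0 < x ⬝ᵥ x :=
    Finset.sum_pos (fun i _ => mul_pos (hx i) (hx i)) Finset.univ_nonempty
  have hAx : x ⬝ᵥ (adjMat G) *ᵥ x = lam * (x ⬝ᵥ x) := by
    rw [hEig, dotProduct_smul, smul_eq_mul]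
  have hA'x : x ⬝ᵥ (adjMat G') *ᵥ x = lam * (x ⬝ᵥ x) + 2 * (x u - x v) * S := by
    rw [hA', Matrix.add_mulVec, dotProduct_add, hAx, hquad]
  by_contra hcon
  push_neg at hcon
  have hray : ∀ y : Fin n → ℝ, y ⬝ᵥ (adjMat G') *ᵥ y ≤ lam' * (y ⬝ᵥ y) := fun y =>
    rayleigh_le_sup_eigenvalues (adjMat_isHermitian G') y
  have hPSD : Matrix.PosSemidef (lam' • (1 : Matrix (Fin n) (Fin n) ℝ) - adjMat G') := by
    refine Matrix.PosSemidef.of_dotProduct_mulVec_nonneg ?_ ?_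
    · refine Matrix.IsHermitian.sub ?_ (adjMat_isHermitian G')
      ext i j
      simp [Matrix.conjTranspose_apply, Matrix.one_apply, eq_comm]
    · intro y
      have h := hray y
      have hst : star y = y := by funext i; simp
      rw [hst, Matrix.sub_mulVec, dotProduct_sub, Matrix.smul_mulVec,
        Matrix.one_mulVec, dotProduct_smul, smul_eq_mul]
      linarith
  have hE : x ⬝ᵥ (lam' • (1 : Matrix (Fin n) (Fin n) ℝ) - adjMat G') *ᵥ x
      = lam' * (x ⬝ᵥ x) - x ⬝ᵥ (adjMat G') *ᵥ x := by
    rw [Matrix.sub_mulVec, dotProduct_sub, Matrix.smul_mulVec,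
      Matrix.one_mulVec, dotProduct_smul, smul_eq_mul]
  have hzero : x ⬝ᵥ (lam' • (1 : Matrix (Fin n) (Fin n) ℝ) - adjMat G') *ᵥ x = 0 := by
    have hge : (0:ℝ) ≤ x ⬝ᵥ (lam' • (1 : Matrix (Fin n) (Fin n) ℝ) - adjMat G') *ᵥ x := by
      have := hPSD.dotProduct_mulVec_nonneg x
      have hst : star x = x := by funext i; simp
      rwa [hst] at this
    have hle : x ⬝ᵥ (lam' • (1 : Matrix (Fin n) (Fin n) ℝ) - adjMat G') *ᵥ x ≤ 0 := by
      rw [hE, hA'x]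
      have h1 : lam' * (x ⬝ᵥ x) ≤ lam * (x ⬝ᵥ x) := mul_le_mul_of_nonneg_right hcon hxx.le
      nlinarith
    linarith
  have hker : (lam' • (1 : Matrix (Fin n) (Fin n) ℝ) - adjMat G') *ᵥ x = 0 := by
    apply (hPSD.dotProduct_mulVec_zero_iff x).mp
    have hst : star x = x := by funext i; simp
    rwa [hst]
  have hApp : (adjMat G') *ᵥ x = lam' • x := by
    have := hker
    rw [Matrix.sub_mulVec, Matrix.smul_mulVec, Matrix.one_mulVec, sub_eq_zero] at this
    exact this.symm
  have hu1 : ((adjMat G') *ᵥ x) u = lam * x u + S := by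
    rw [hA', Matrix.add_mulVec, Pi.add_apply, hDu]
    have : ((adjMat G) *ᵥ x) u = lam * x u := by
      rw [hEig]; simp
    rw [this]
  have hu2 : ((adjMat G') *ᵥ x) u = lam' * x u := by rw [hApp]; simp
  have hle : lam' * x u ≤ lam * x u := mul_le_mul_of_nonneg_right hcon (hx u).le
  rw [hu1] at hu2
  linarith
end

section
/- If G is a C_{2k+1}-free graph on n vertices with m edges, then the number of triangles in G is at most (2/3)·k·m. -/
section Aux
open SimpleGraph
set_option linter.unusedSectionVars false
set_option maxHeartbeats 1000000

lemma chain'_rotation {α : Type*} {R : α → α → Prop} {l₁ l₂ : List α}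
    (h : List.Chain' R (l₁ ++ l₂))
    (hw : ∀ x ∈ (l₁ ++ l₂).getLast?, ∀ y ∈ (l₁ ++ l₂).head?, R x y) :
    List.Chain' R (l₂ ++ l₁) := by
  obtain ⟨C1, C2, j⟩ := List.isChain_append.mp h
  refine List.isChain_append.mpr ⟨C2, C1, ?_⟩
  intro x hx y hy
  rcases List.eq_nil_or_concat l₂ with rfl | ⟨l₂', z, rfl⟩
  · simp at hx
  · rcases l₁ with - | ⟨w, l₁'⟩
    · simp at hy
    · apply hw
      · rwa [List.getLast?_append_of_ne_nil _ (by simp)]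
      · rwa [List.head?_append_of_ne_nil _ (by simp)]

lemma idx_helper {α : Type*} [DecidableEq α] {l : List α} {x : α} {j : ℕ}
    (hl : l.idxOf x < l.length) (h : l.idxOf x = j) : x = l[j]'(h ▸ hl) := by
  cases h; exact (List.getElem_idxOf hl).symm

lemma getElem_eq_of_eq {α : Type*} {l : List α} {i j : ℕ} (h : i = j) (hi : i < l.length) :
    l[i] = l[j]'(h ▸ hi) := by cases h; rfl


variable {V : Type*} [Fintype V] [DecidableEq V] (G : SimpleGraph V) [DecidableRel G.Adj]

lemma helper1 : ∀ {a b : V} (q : G.Walk a b), q.support.Nodup → s(b,a) ∈ q.edges → q.length = 1 := by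
  intro a b q
  induction q with
  | nil => simp
  | @cons a c b h q ih =>
    intro hnd he
    rw [Walk.support_cons, List.nodup_cons] at hnd
    rw [Walk.edges_cons, List.mem_cons] at he
    rcases he with he | he
    · rw [Sym2.eq_iff] at he
      rcases he with ⟨rfl, rfl⟩ | ⟨rfl, -⟩
      · exact absurd rfl h.ne
      · have : q = Walk.nil := (Walk.isPath_iff_eq_nil (p := q)).mp (by rw [Walk.isPath_def]; exact hnd.2)
        subst this; simp
    · exact absurd (q.snd_mem_support_of_mem_edges he) hnd.1

lemma walk_of_list : ∀ (t : List V) (a : V), List.Chain' G.Adj (a :: t) →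
    ∃ w : G.Walk a ((a :: t).getLast (by simp)), w.support = a :: t := by
  intro t
  induction t with
  | nil => intro a _; exact ⟨Walk.nil, by simp⟩
  | cons c t' ih =>
    intro a hc
    replace hc := List.isChain_cons_cons.mp hc
    obtain ⟨w', hw'⟩ := ih c hc.2
    refine ⟨(Walk.cons hc.1 w').copy rfl (by simp [List.getLast_cons]), ?_⟩
    simp [hw']


lemma no_nbr_path {k : ℕ} (hk : 1 ≤ k) (hfree : ¬ hasCycle G (2*k+1)) (v : V)
    (l : List V) (hc : List.Chain' G.Adj l) (hnd : l.Nodup) (hsub : ∀ x ∈ l, G.Adj v x) :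
    l.length < 2*k := by
  by_contra hlen
  push_neg at hlen
  set l' := l.take (2*k) with hl'
  have hc' : List.Chain' G.Adj l' := hc.take _
  have hnd' : l'.Nodup := hnd.sublist (List.take_sublist _ _)
  have hsub' : ∀ x ∈ l', G.Adj v x := fun x hx => hsub x (List.take_subset _ _ hx)
  have hlen' : l'.length = 2*k := by simp [hl', hlen]
  have hne : l' ≠ [] := by intro h; rw [h] at hlen'; simp at hlen'; omega
  have hvc : List.Chain' G.Adj (v :: l') := by
    refine List.isChain_cons.mpr ?_
    exact ⟨fun y hy => hsub' y (List.mem_of_mem_head? hy), hc'⟩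
  obtain ⟨p, hp⟩ := walk_of_list G l' v hvc
  have hbl : (v :: l').getLast (by simp) ∈ l' := by
    rw [List.getLast_cons hne]
    exact List.getLast_mem hne
  have hvnotin : v ∉ l' := fun h => (hsub' v h).ne rfl
  have hsupnd : p.support.Nodup := by rw [hp]; exact List.nodup_cons.mpr ⟨hvnotin, hnd'⟩
  have hppath : p.IsPath := by rw [Walk.isPath_def]; exact hsupnd
  have hplen : p.length = 2*k := by
    have := p.length_support
    rw [hp] at this; simp at this; omega
  have hadj : G.Adj v ((v :: l').getLast (by simp)) := hsub' _ hbl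
  have hcyc : (Walk.cons hadj p.reverse).IsCycle := by
    rw [Walk.cons_isCycle_iff]
    refine ⟨hppath.reverse, fun he => ?_⟩
    rw [Walk.edges_reverse, List.mem_reverse] at he
    rw [Sym2.eq_swap] at he
    have := helper1 G p hsupnd he
    omega
  exact hfree ⟨v, _, hcyc, by simp [hplen, Nat.add_comm]⟩

lemma del_identity (s : Finset V) (v : V) (hv : v ∈ s) :
    ∑ u ∈ s, (G.neighborFinset u ∩ s).card
      = (∑ u ∈ s.erase v, (G.neighborFinset u ∩ s.erase v).card)
        + 2 * (G.neighborFinset v ∩ s).card := by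
  have hvv : v ∉ G.neighborFinset v := by simp
  rw [← Finset.add_sum_erase s _ hv]
  have h1 : ∀ u ∈ s.erase v, (G.neighborFinset u ∩ s).card
      = (G.neighborFinset u ∩ s.erase v).card + (if G.Adj u v then 1 else 0) := by
    intro u hu
    have : G.neighborFinset u ∩ s
        = (G.neighborFinset u ∩ s.erase v) ∪ (G.neighborFinset u ∩ {v}) := by
      rw [← Finset.inter_union_distrib_left]
      congr 1
      ext z
      simp only [Finset.mem_union, Finset.mem_erase, Finset.mem_singleton]
      constructor
      · intro hz; by_cases hzv : z = v
        · exact Or.inr hzv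
        · exact Or.inl ⟨hzv, hz⟩
      · rintro (⟨-, hz⟩ | rfl) <;> [exact hz; exact hv]
    rw [this, Finset.card_union_of_disjoint, Finset.inter_comm _ {v},
      Finset.singleton_inter]
    · simp only [mem_neighborFinset]; split <;> simp
    · simp only [Finset.disjoint_left, Finset.mem_inter, Finset.mem_erase,
        Finset.mem_singleton]
      rintro z ⟨-, hz, -⟩ ⟨-, rfl⟩; exact hz rfl
  rw [Finset.sum_congr rfl h1, Finset.sum_add_distrib, ← Finset.card_filter]
  have h2 : (s.erase v).filter (fun x => G.Adj x v) = G.neighborFinset v ∩ s := by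
    ext x
    simp only [Finset.mem_filter, Finset.mem_erase, Finset.mem_inter, mem_neighborFinset]
    constructor
    · rintro ⟨⟨-, hx⟩, ha⟩; exact ⟨ha.symm, hx⟩
    · rintro ⟨ha, hx⟩; exact ⟨⟨ha.ne', hx⟩, ha.symm⟩
  rw [h2]; ring

lemma eg_bound (k : ℕ) (hk : 1 ≤ k) :
    ∀ (m : ℕ) (s : Finset V), s.card ≤ m →
    (∀ l : List V, List.Chain' G.Adj l → l.Nodup → (∀ x ∈ l, x ∈ s) → l.length < 2*k) →
    ∑ u ∈ s, (G.neighborFinset u ∩ s).card ≤ 2 * k * s.card := by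
  intro m
  induction m with
  | zero =>
    intro s hs _
    have : s = ∅ := Finset.card_eq_zero.mp (by omega)
    subst this; simp
  | succ m ih =>
    intro s hcard hnp
    by_cases hA : ∃ v ∈ s, (G.neighborFinset v ∩ s).card ≤ k
    · obtain ⟨v, hv, hdeg⟩ := hA
      rw [del_identity G s v hv]
      have h1 := ih (s.erase v) (by have := Finset.card_erase_of_mem hv; omega)
        (fun l hc hnd hsub => hnp l hc hnd (fun x hx => Finset.mem_of_mem_erase (hsub x hx)))
      have h2 : s.card = (s.erase v).card + 1 := by
        rw [Finset.card_erase_of_mem hv]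
        have := Finset.card_pos.mpr ⟨v, hv⟩; omega
      rw [h2, Nat.mul_add, Nat.mul_one]
      omega
    · push_neg at hA
      rcases Finset.eq_empty_or_nonempty s with rfl | ⟨v₀, hv₀⟩
      · simp
      classical
      set P : ℕ → Prop := fun mm => ∃ l : List V, l ≠ [] ∧ List.Chain' G.Adj l ∧ l.Nodup ∧
        (∀ x ∈ l, x ∈ s) ∧ l.length = mm with hP
      have hP1 : P 1 := ⟨[v₀], by simp, List.isChain_singleton v₀, by simp, by simpa, rfl⟩
      have hPbound : ∀ mm, P mm → mm < 2*k := by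
        rintro mm ⟨l, -, hc, hnd, hsub, hlen⟩
        exact hlen ▸ hnp l hc hnd hsub
      set L := Nat.findGreatest P (2*k) with hLdef
      have hL1 : 1 ≤ L := Nat.le_findGreatest (by omega) hP1
      have hPL : P L := Nat.findGreatest_spec (show 1 ≤ 2*k by omega) hP1
      have hmax : ∀ mm, P mm → mm ≤ L := fun mm hmm =>
        Nat.le_findGreatest (le_of_lt (hPbound mm hmm)) hmm
      have hL2k : L < 2*k := hPbound L hPL
      obtain ⟨l, hne, hc, hnd, hsub, hlen⟩ := hPL
      set a := l.head hne with ha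
      set b := l.getLast hne with hb
      have hal : a ∈ l := List.head_mem hne
      have hbl : b ∈ l := List.getLast_mem hne
      have has : a ∈ s := hsub a hal
      have hbs : b ∈ s := hsub b hbl
      -- front closure
      have hfc : ∀ x, G.Adj a x → x ∈ s → x ∈ l := by
        intro x hax hxs
        by_contra hxl
        have hQ : P (L+1) := by
          refine ⟨x :: l, by simp, ?_, List.nodup_cons.mpr ⟨hxl, hnd⟩, ?_, by simp [hlen]⟩
          · refine List.isChain_cons.mpr ⟨?_, hc⟩
            intro y hy
            rw [List.head?_eq_head hne] at hy
            simp only [Option.mem_some_iff] at hy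
            subst hy
            exact hax.symm
          · intro y hy
            rcases List.mem_cons.mp hy with rfl | hy
            · exact hxs
            · exact hsub y hy
        have := hmax _ hQ; omega
      -- back closure
      have hbc : ∀ x, G.Adj b x → x ∈ s → x ∈ l := by
        intro x hbx hxs
        by_contra hxl
        have hQ : P (L+1) := by
          refine ⟨l ++ [x], by simp, ?_, ?_, ?_, by simp [hlen]⟩
          · refine List.isChain_append.mpr ⟨hc, List.isChain_singleton x, ?_⟩
            intro y hy z hz
            rw [List.getLast?_eq_getLast hne] at hy
            simp only [Option.mem_some_iff] at hy
            simp only [List.head?_cons, Option.mem_some_iff] at hz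
            subst hy; subst hz
            exact hbx
          · rw [List.nodup_append]
            exact ⟨hnd, List.nodup_singleton x, fun a ha b hb => by simp at hb; subst hb; exact fun h => hxl (h ▸ ha)⟩
          · intro y hy
            rcases List.mem_append.mp hy with hy | hy
            · exact hsub y hy
            · simp at hy; rwa [hy]
        have := hmax _ hQ; omega
      have hcardC : l.toFinset.card = L := by rw [List.toFinset_card_of_nodup hnd, hlen]
      -- L ≥ k + 2
      have hLk : k + 2 ≤ L := by
        have hsubA : G.neighborFinset a ∩ s ⊆ l.toFinset.erase a := by
          intro x hx
          rw [Finset.mem_inter, mem_neighborFinset] at hx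
          rw [Finset.mem_erase, List.mem_toFinset]
          exact ⟨hx.1.ne', hfc x hx.1 hx.2⟩
        have h1 := Finset.card_le_card hsubA
        rw [Finset.card_erase_of_mem (List.mem_toFinset.mpr hal), hcardC] at h1
        have h2 := hA a has
        omega
      set g : ℕ → V := fun i => l.getD i a with hg
      have hgetD : ∀ i (h : i < l.length), g i = l[i] := fun i h => List.getD_eq_getElem l a h
      have hidx : ∀ x ∈ l, l.idxOf x < L := fun x hx => hlen ▸ List.idxOf_lt_length_iff.mpr hx
      set A := (Finset.range (L-1)).filter (fun i => G.Adj a (g (i+1))) with hAdef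
      set B := (Finset.range (L-1)).filter (fun i => G.Adj b (g i)) with hBdef
      have hidx0 : ∀ x ∈ l, x ≠ a → l.idxOf x ≠ 0 := by
        intro x hxl hxa h
        apply hxa
        have h1' : l.idxOf x < l.length := by have := hidx x hxl; omega
        have h2 := idx_helper h1' h
        rw [h2, ha, List.head_eq_getElem]
      have hidxL : ∀ x ∈ l, x ≠ b → l.idxOf x ≠ L - 1 := by
        intro x hxl hxb h
        apply hxb
        have h1' : l.idxOf x < l.length := by have := hidx x hxl; omega
        have h2 := idx_helper h1' h
        rw [h2, hb, List.getLast_eq_getElem]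
        exact getElem_eq_of_eq (by omega) _
      have hinj : ∀ x ∈ l, ∀ y ∈ l, l.idxOf x = l.idxOf y → x = y := by
        intro x hxl y hyl h
        have hx' : l.idxOf x < l.length := by have := hidx x hxl; omega
        have hy' : l.idxOf y < l.length := by have := hidx y hyl; omega
        calc x = l[l.idxOf x]'hx' := idx_helper hx' rfl
          _ = l[l.idxOf y]'hy' := getElem_eq_of_eq h _
          _ = y := (idx_helper hy' rfl).symm
      have hAcard : k + 1 ≤ A.card := by
        have h0 := hA a has
        have h1 : (G.neighborFinset a ∩ s).card ≤ A.card := by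
          apply Finset.card_le_card_of_injOn (fun x => l.idxOf x - 1)
          · intro x hx
            rw [Finset.mem_coe, Finset.mem_inter, mem_neighborFinset] at hx
            have hxl : x ∈ l := hfc x hx.1 hx.2
            have h1 : l.idxOf x < L := hidx x hxl
            have h1' : l.idxOf x < l.length := by omega
            have h0' : l.idxOf x ≠ 0 := hidx0 x hxl hx.1.ne'
            rw [Finset.mem_coe, hAdef, Finset.mem_filter, Finset.mem_range]
            refine ⟨by beta_reduce; omega, ?_⟩
            have he : l.idxOf x - 1 + 1 = l.idxOf x := by omega
            rw [he, hgetD _ h1', List.getElem_idxOf h1']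
            exact hx.1
          · intro x hx y hy hxy
            rw [Finset.coe_inter, Set.mem_inter_iff, Finset.mem_coe, mem_neighborFinset] at hx hy
            have hxl : x ∈ l := hfc x hx.1 (by simpa using hx.2)
            have hyl : y ∈ l := hfc y hy.1 (by simpa using hy.2)
            have hx0 := hidx0 x hxl hx.1.ne'
            have hy0 := hidx0 y hyl hy.1.ne'
            have hxy' : l.idxOf x - 1 = l.idxOf y - 1 := hxy
            exact hinj x hxl y hyl (by omega)
        omega
      have hBcard : k + 1 ≤ B.card := by
        have h0 := hA b hbs
        have h1 : (G.neighborFinset b ∩ s).card ≤ B.card := by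
          apply Finset.card_le_card_of_injOn (fun x => l.idxOf x)
          · intro x hx
            rw [Finset.mem_coe, Finset.mem_inter, mem_neighborFinset] at hx
            have hxl : x ∈ l := hbc x hx.1 hx.2
            have h1 : l.idxOf x < L := hidx x hxl
            have h1' : l.idxOf x < l.length := by omega
            have hL0 : l.idxOf x ≠ L - 1 := hidxL x hxl hx.1.ne'
            rw [Finset.mem_coe, hBdef, Finset.mem_filter, Finset.mem_range]
            refine ⟨by beta_reduce; omega, ?_⟩
            rw [hgetD _ h1', List.getElem_idxOf h1']
            exact hx.1
          · intro x hx y hy hxy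
            rw [Finset.coe_inter, Set.mem_inter_iff, Finset.mem_coe, mem_neighborFinset] at hx hy
            have hxl : x ∈ l := hbc x hx.1 (by simpa using hx.2)
            have hyl : y ∈ l := hbc y hy.1 (by simpa using hy.2)
            exact hinj x hxl y hyl hxy
        omega
      have hinter : (A ∩ B).Nonempty := by
        rw [← Finset.card_pos]
        have h1 := Finset.card_union_add_card_inter A B
        have h2 : (A ∪ B).card ≤ L - 1 := by
          refine le_trans (Finset.card_le_card ?_) (by rw [Finset.card_range])
          rw [hAdef, hBdef]
          exact Finset.union_subset (Finset.filter_subset _ _) (Finset.filter_subset _ _)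
        omega
      obtain ⟨i, hiAB⟩ := hinter
      rw [Finset.mem_inter, hAdef, hBdef, Finset.mem_filter, Finset.mem_filter,
        Finset.mem_range] at hiAB
      obtain ⟨⟨hi, hiA⟩, -, hiB⟩ := hiAB
      -- the cyclic list
      have hi1 : i + 1 < l.length := by omega
      have hii : i < l.length := by omega
      set t1 := l.take (i+1) with ht1
      set t2 := l.drop (i+1) with ht2
      have ht12 : t1 ++ t2 = l := List.take_append_drop _ l
      have hlt1 : t1.length = i + 1 := by rw [ht1, List.length_take]; omega
      have ht1ne : t1 ≠ [] := by intro h; rw [h] at hlt1; simp at hlt1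
      have ht2ne : t2 ≠ [] := by
        intro h
        have h2 : t2.length = 0 := by rw [h]; rfl
        rw [ht2, List.length_drop] at h2; omega
      set r := t1 ++ t2.reverse with hr
      have hperm : r.Perm l := by
        conv_rhs => rw [← ht12]
        exact List.Perm.append_left t1 (List.reverse_perm t2)
      have hcl : List.Chain' G.Adj (t1 ++ t2) := by rw [ht12]; exact hc
      obtain ⟨hct1, hct2, hj12⟩ := List.isChain_append.mp hcl
      have hflip : flip G.Adj = G.Adj := by
        funext x y
        exact propext ⟨fun h => h.symm, fun h => h.symm⟩
      have hct2r : List.Chain' G.Adj t2.reverse := by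
        exact List.isChain_reverse.mpr (hct2.imp fun _ _ h => h.symm)
      have ht1last : t1.getLast? = some (l[i]'hii) := by
        rw [List.getLast?_eq_getLast ht1ne, List.getLast_eq_getElem]
        congr 1
        calc t1[t1.length - 1]'(by omega) = t1[i]'(by omega) := getElem_eq_of_eq (by omega) _
          _ = l[i]'hii := List.getElem_take
      have ht2head : t2.head? = some (l[i+1]'hi1) := by
        rw [ht2, List.head?_drop, List.getElem?_eq_getElem hi1]
      have hlast_l : l.getLast? = some b := by rw [List.getLast?_eq_getLast hne]
      have ht2last : t2.getLast? = some b := by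
        rw [← hlast_l]
        conv_rhs => rw [← ht12]
        rw [List.getLast?_append_of_ne_nil _ ht2ne]
      have hhead_l : l.head? = some a := by rw [List.head?_eq_head hne]
      have ht1head : t1.head? = some a := by
        rw [← hhead_l]
        conv_rhs => rw [← ht12]
        rw [List.head?_append_of_ne_nil _ ht1ne]
      have hgi : g i = l[i]'hii := hgetD i hii
      have hgi1 : g (i+1) = l[i+1]'hi1 := hgetD _ hi1
      have hcr : List.Chain' G.Adj r := by
        refine List.isChain_append.mpr ⟨hct1, hct2r, ?_⟩
        intro x hx y hy
        rw [ht1last] at hx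
        rw [List.head?_reverse, ht2last] at hy
        simp only [Option.mem_some_iff] at hx hy
        subst hx; subst hy
        rw [hgi] at hiB
        exact hiB.symm
      have hrlast : r.getLast? = some (l[i+1]'hi1) := by
        rw [hr, List.getLast?_append_of_ne_nil _ (by simpa using ht2ne : t2.reverse ≠ []),
          List.getLast?_reverse, ht2head]
      have hrhead : r.head? = some a := by rw [hr, List.head?_append_of_ne_nil _ ht1ne, ht1head]
      have hwrap : ∀ x ∈ r.getLast?, ∀ y ∈ r.head?, G.Adj x y := by
        intro x hx y hy
        rw [hrlast] at hx; rw [hrhead] at hy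
        simp only [Option.mem_some_iff] at hx hy
        subst hx; subst hy
        rw [hgi1] at hiA
        exact hiA.symm
      have hclo : ∀ x ∈ s, x ∉ l.toFinset → ∀ y ∈ l.toFinset, ¬ G.Adj x y := by
        intro x hxs hxC y hyC hadj
        have hyr : y ∈ r := hperm.mem_iff.mpr (List.mem_toFinset.mp hyC)
        obtain ⟨r₁, r₂, hrr⟩ := List.append_of_mem hyr
        have hr' : (r₁ ++ [y]) ++ r₂ = r := by rw [hrr]; simp
        have hcr' : List.Chain' G.Adj ((r₁ ++ [y]) ++ r₂) := by rw [hr']; exact hcr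
        have hw' : ∀ x' ∈ ((r₁ ++ [y]) ++ r₂).getLast?, ∀ y' ∈ ((r₁ ++ [y]) ++ r₂).head?,
            G.Adj x' y' := by rw [hr']; exact hwrap
        have hrot : List.Chain' G.Adj (r₂ ++ (r₁ ++ [y])) := chain'_rotation hcr' hw'
        have hrperm2 : ((r₁ ++ [y]) ++ r₂).Perm l := by rw [hr']; exact hperm
        have hrotperm : (r₂ ++ (r₁ ++ [y])).Perm l := List.perm_append_comm.trans hrperm2
        have hrotlast : (r₂ ++ (r₁ ++ [y])).getLast? = some y := by
          rw [← List.append_assoc]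
          exact List.getLast?_concat
        have hxnotin : x ∉ r₂ ++ (r₁ ++ [y]) := fun hxin =>
          hxC (List.mem_toFinset.mpr (hrotperm.subset hxin))
        have hQ : P (L+1) := by
          refine ⟨(r₂ ++ (r₁ ++ [y])) ++ [x], by simp, ?_, ?_, ?_, ?_⟩
          · refine List.isChain_append.mpr ⟨hrot, List.isChain_singleton x, ?_⟩
            intro z hz w hw
            rw [hrotlast] at hz
            simp only [Option.mem_some_iff, List.head?_cons] at hz hw
            subst hz; subst hw
            exact hadj.symm
          · rw [List.nodup_append]
            refine ⟨hrotperm.nodup_iff.mpr hnd, List.nodup_singleton x, ?_⟩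
            exact fun a ha b hb => by simp at hb; subst hb; exact fun h => hxnotin (h ▸ ha)
          · intro z hz
            rcases List.mem_append.mp hz with hz | hz
            · exact hsub z (hrotperm.subset hz)
            · simp only [List.mem_singleton] at hz; rwa [hz]
          · have hL := hrotperm.length_eq
            rw [hlen] at hL
            simp only [List.length_append, List.length_cons, List.length_nil] at hL ⊢
            omega
        have := hmax _ hQ; omega
      set C := l.toFinset with hC
      have hCs : C ⊆ s := fun x hx => hsub x (List.mem_toFinset.mp hx)
      have hsplit : ∑ u ∈ s, (G.neighborFinset u ∩ s).card
          = ∑ u ∈ C, (G.neighborFinset u ∩ C).card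
            + ∑ u ∈ s \ C, (G.neighborFinset u ∩ (s \ C)).card := by
        rw [← Finset.sum_sdiff hCs, add_comm]
        congr 1
        · apply Finset.sum_congr rfl
          intro u huC
          congr 1
          ext z
          simp only [Finset.mem_inter, mem_neighborFinset]
          constructor
          · rintro ⟨hadj, hzs⟩
            refine ⟨hadj, ?_⟩
            by_contra hzC
            exact hclo z hzs hzC u huC hadj.symm
          · rintro ⟨hadj, hz⟩
            exact ⟨hadj, hCs hz⟩
        · apply Finset.sum_congr rfl
          intro u hu
          rw [Finset.mem_sdiff] at hu
          congr 1
          ext z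
          simp only [Finset.mem_inter, mem_neighborFinset, Finset.mem_sdiff]
          constructor
          · rintro ⟨hadj, hzs⟩
            refine ⟨hadj, hzs, ?_⟩
            intro hzC
            exact hclo u hu.1 hu.2 z hzC hadj
          · rintro ⟨hadj, hz, -⟩
            exact ⟨hadj, hz⟩
      rw [hsplit]
      have hCb : ∑ u ∈ C, (G.neighborFinset u ∩ C).card ≤ 2 * k * C.card := by
        have hterm : ∀ u ∈ C, (G.neighborFinset u ∩ C).card ≤ 2 * k := by
          intro u hu
          have hsub2 : G.neighborFinset u ∩ C ⊆ C.erase u := by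
            intro z hz
            rw [Finset.mem_inter, mem_neighborFinset] at hz
            rw [Finset.mem_erase]
            exact ⟨hz.1.ne', hz.2⟩
          have h4 := Finset.card_le_card hsub2
          rw [Finset.card_erase_of_mem hu] at h4
          have h5 : C.card = L := hcardC
          omega
        calc ∑ u ∈ C, (G.neighborFinset u ∩ C).card ≤ C.card • (2*k) :=
            Finset.sum_le_card_nsmul C _ (2*k) hterm
          _ = 2 * k * C.card := by rw [smul_eq_mul, mul_comm]
      have hIH : ∑ u ∈ s \ C, (G.neighborFinset u ∩ (s \ C)).card ≤ 2*k*(s \ C).card := by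
        apply ih
        · have h4 : (s \ C).card = s.card - C.card := Finset.card_sdiff_of_subset hCs
          have h5 : C.card = L := hcardC
          omega
        · intro l' hc' hnd' hsub'
          exact hnp l' hc' hnd' (fun x hx => (Finset.mem_sdiff.mp (hsub' x hx)).1)
      have h4 : (s \ C).card = s.card - C.card := Finset.card_sdiff_of_subset hCs
      have h5 : C.card = L := hcardC
      have h6 : L ≤ s.card := h5 ▸ Finset.card_le_card hCs
      calc ∑ u ∈ C, (G.neighborFinset u ∩ C).card
            + ∑ u ∈ s \ C, (G.neighborFinset u ∩ (s \ C)).card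
          ≤ 2*k*C.card + 2*k*(s \ C).card := Nat.add_le_add hCb hIH
        _ = 2*k*(C.card + (s \ C).card) := by rw [Nat.mul_add]
        _ = 2*k*s.card := by congr 1; omega

lemma triple_card_eq :
    ((Finset.univ : Finset (V × V × V)).filter
      (fun x => G.Adj x.1 x.2.1 ∧ G.Adj x.1 x.2.2 ∧ G.Adj x.2.1 x.2.2)).card
    = 6 * (G.cliqueFinset 3).card := by
  set T3 := (Finset.univ : Finset (V × V × V)).filter
      (fun x => G.Adj x.1 x.2.1 ∧ G.Adj x.1 x.2.2 ∧ G.Adj x.2.1 x.2.2) with hT3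
  have hmem : ∀ x ∈ T3, ({x.1, x.2.1, x.2.2} : Finset V) ∈ G.cliqueFinset 3 := by
    intro x hx
    rw [hT3, Finset.mem_filter] at hx
    rw [mem_cliqueFinset_iff]
    exact is3Clique_triple_iff.mpr ⟨hx.2.1, hx.2.2.1, hx.2.2.2⟩
  rw [Finset.card_eq_sum_card_fiberwise hmem]
  have hfiber : ∀ t ∈ G.cliqueFinset 3,
      (T3.filter (fun x => ({x.1, x.2.1, x.2.2} : Finset V) = t)).card = 6 := by
    intro t ht
    have ht' := mem_cliqueFinset_iff.mp ht
    obtain ⟨x, y, z, hxy, hxz, hyz, rfl⟩ := Finset.card_eq_three.mp ht'.card_eq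
    obtain ⟨haxy, haxz, hayz⟩ := is3Clique_triple_iff.mp ht'
    have hset : T3.filter (fun w => ({w.1, w.2.1, w.2.2} : Finset V) = ({x, y, z} : Finset V))
        = {(x,y,z),(x,z,y),(y,x,z),(y,z,x),(z,x,y),(z,y,x)} := by
      ext ⟨a, b, c⟩
      simp only [hT3, Finset.mem_filter, Finset.mem_univ, true_and, Finset.mem_insert,
        Finset.mem_singleton, Prod.mk.injEq]
      constructor
      · rintro ⟨⟨hab, hac, hbc⟩, hs⟩
        have ha : a = x ∨ a = y ∨ a = z := by
          have : a ∈ ({x, y, z} : Finset V) := hs ▸ (by simp)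
          simpa using this
        have hb : b = x ∨ b = y ∨ b = z := by
          have : b ∈ ({x, y, z} : Finset V) := hs ▸ (by simp)
          simpa using this
        have hc : c = x ∨ c = y ∨ c = z := by
          have : c ∈ ({x, y, z} : Finset V) := hs ▸ (by simp)
          simpa using this
        have h1 := hab.ne
        have h2 := hac.ne
        have h3 := hbc.ne
        rcases ha with rfl|rfl|rfl <;> rcases hb with rfl|rfl|rfl <;>
          rcases hc with rfl|rfl|rfl <;>
          first
            | exact (h1 rfl).elim
            | exact (h2 rfl).elim
            | exact (h3 rfl).elim
            | simp
      · have h1 := haxy.symm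
        have h2 := haxz.symm
        have h3 := hayz.symm
        rintro (⟨rfl,rfl,rfl⟩|⟨rfl,rfl,rfl⟩|⟨rfl,rfl,rfl⟩|⟨rfl,rfl,rfl⟩|⟨rfl,rfl,rfl⟩|⟨rfl,rfl,rfl⟩) <;>
          refine ⟨⟨by assumption, by assumption, by assumption⟩, ?_⟩ <;>
          first
            | rfl
            | (ext w; simp only [Finset.mem_insert, Finset.mem_singleton]; tauto)
    rw [hset]
    rw [Finset.card_insert_of_notMem (by simp [Prod.ext_iff]; tauto),
      Finset.card_insert_of_notMem (by simp [Prod.ext_iff]; tauto),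
      Finset.card_insert_of_notMem (by simp [Prod.ext_iff]; tauto),
      Finset.card_insert_of_notMem (by simp [Prod.ext_iff]; tauto),
      Finset.card_insert_of_notMem (by simp [Prod.ext_iff]; tauto),
      Finset.card_singleton]
  rw [Finset.sum_congr rfl hfiber, Finset.sum_const, smul_eq_mul, mul_comm]

lemma triple_card_sum :
    ((Finset.univ : Finset (V × V × V)).filter
      (fun x => G.Adj x.1 x.2.1 ∧ G.Adj x.1 x.2.2 ∧ G.Adj x.2.1 x.2.2)).card
    = ∑ v : V, ∑ u ∈ G.neighborFinset v,
        (G.neighborFinset u ∩ G.neighborFinset v).card := by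
  set T3 := (Finset.univ : Finset (V × V × V)).filter
      (fun x => G.Adj x.1 x.2.1 ∧ G.Adj x.1 x.2.2 ∧ G.Adj x.2.1 x.2.2) with hT3
  rw [Finset.card_eq_sum_card_fiberwise
    (f := fun x : V × V × V => x.1) (t := Finset.univ) (fun x _ => Finset.mem_univ _)]
  apply Finset.sum_congr rfl
  intro v _
  have hdec : T3.filter (fun x => x.1 = v) = (G.neighborFinset v).biUnion
      (fun u => (G.neighborFinset u ∩ G.neighborFinset v).image (fun w => (v, u, w))) := by
    ext ⟨a, b, c⟩
    simp only [hT3, Finset.mem_filter, Finset.mem_univ, true_and, Finset.mem_biUnion,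
      Finset.mem_image, Finset.mem_inter, mem_neighborFinset, Prod.mk.injEq]
    constructor
    · rintro ⟨⟨h1, h2, h3⟩, rfl⟩
      exact ⟨b, h1, c, ⟨h3, h2⟩, rfl, rfl, rfl⟩
    · rintro ⟨u, hu, w, ⟨hw1, hw2⟩, rfl, rfl, rfl⟩
      exact ⟨⟨hu, hw2, hw1⟩, rfl⟩
  rw [hdec, Finset.card_biUnion]
  · apply Finset.sum_congr rfl
    intro u _
    exact Finset.card_image_of_injective _ (fun w1 w2 h => by simpa using h)
  · intro u1 h1 u2 h2 hne
    rw [Function.onFun, Finset.disjoint_left]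
    rintro ⟨a, b, c⟩ hx1 hx2
    simp only [Finset.mem_image, Prod.mk.injEq] at hx1 hx2
    obtain ⟨w1, -, -, rfl, -⟩ := hx1
    obtain ⟨w2, -, -, h, -⟩ := hx2
    exact hne h.symm

end Aux

/-- A `C_{2k+1}`-free graph with `m` edges has at most `(2/3)·k·m` triangles. -/
theorem triangle_count_C2k1_free {n k : ℕ} (hk : 2 ≤ k)
    (G : SimpleGraph (Fin n)) [DecidableRel G.Adj]
    (hfree : ¬ hasCycle G (2 * k + 1)) :
    ((G.cliqueFinset 3).card : ℝ) ≤ 2 / 3 * (k : ℝ) * (G.edgeFinset.card : ℝ) := by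
  classical
  have hk1 : 1 ≤ k := by omega
  have hv : ∀ v : Fin n,
      ∑ u ∈ G.neighborFinset v, (G.neighborFinset u ∩ G.neighborFinset v).card
        ≤ 2 * k * (G.neighborFinset v).card := by
    intro v
    apply eg_bound G k hk1 ((G.neighborFinset v).card) (G.neighborFinset v) le_rfl
    intro l hc hnd hsub
    exact no_nbr_path G hk1 hfree v l hc hnd
      (fun x hx => (SimpleGraph.mem_neighborFinset G v x).mp (hsub x hx))
  have h6 : 6 * (G.cliqueFinset 3).card ≤ 4 * k * G.edgeFinset.card := by
    calc 6 * (G.cliqueFinset 3).card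
        = ((Finset.univ : Finset (Fin n × Fin n × Fin n)).filter
            (fun x => G.Adj x.1 x.2.1 ∧ G.Adj x.1 x.2.2 ∧ G.Adj x.2.1 x.2.2)).card :=
          (triple_card_eq G).symm
      _ = ∑ v : Fin n, ∑ u ∈ G.neighborFinset v,
            (G.neighborFinset u ∩ G.neighborFinset v).card := triple_card_sum G
      _ ≤ ∑ v : Fin n, 2 * k * (G.neighborFinset v).card :=
          Finset.sum_le_sum (fun v _ => hv v)
      _ = 2 * k * ∑ v : Fin n, (G.neighborFinset v).card := by rw [Finset.mul_sum]
      _ = 2 * k * ∑ v : Fin n, G.degree v := rfl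
      _ = 2 * k * (2 * G.edgeFinset.card) := by rw [SimpleGraph.sum_degrees_eq_twice_card_edges]
      _ = 4 * k * G.edgeFinset.card := by ring
  have h6' : (6 : ℝ) * ((G.cliqueFinset 3).card : ℝ)
      ≤ 4 * (k : ℝ) * (G.edgeFinset.card : ℝ) := by
    exact_mod_cast h6
  linarith
end
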